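/- arXiv:1311.5832 — 5 statements merged into one kernel-verified Lean document; each statement's English description precedes it below -/
import Mathlib

section
/- Let d ≥ 2, let u ∈ [0,1]^d with u_i ≤ u_j whenever i ≤ j, let C be a d-copula and π ∈ S_d. Let i_1 < i_2 < ⋯ < i_p be exactly those indices i ∈ {1,…,d} with π(i) ≠ i (assume p ≥ 2). Then |C(u) − C(u_π)| ≤ Σ_{k = ⌈p/2⌉+1}^{p} (u_{i_k} − u_{i_1}). -/
open Finset


/-- A `d`-copula: a function `C : [0,1]^d → ℝ` (defined on all of `(Fin d → ℝ)`,
with the copula conditions imposed on `[0,1]^d`) that is grounded, has uniform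
one-dimensional margins, and is `d`-increasing. -/
def IsCopula (d : ℕ) (C : (Fin d → ℝ) → ℝ) : Prop :=
  (∀ u : Fin d → ℝ, (∀ i, u i ∈ Set.Icc (0:ℝ) 1) → (∃ i, u i = 0) → C u = 0) ∧
  (∀ u : Fin d → ℝ, (∀ i, u i ∈ Set.Icc (0:ℝ) 1) →
    ∀ i : Fin d, (∀ j, j ≠ i → u j = 1) → C u = u i) ∧
  (∀ a b : Fin d → ℝ, (∀ i, a i ∈ Set.Icc (0:ℝ) 1) → (∀ i, b i ∈ Set.Icc (0:ℝ) 1) →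
    (∀ i, a i ≤ b i) →
    0 ≤ ∑ S : Finset (Fin d),
        (-1 : ℝ) ^ (d - S.card) * C (fun k => if k ∈ S then b k else a k))

lemma box2 {d : ℕ} (hd : 2 ≤ d) {C : (Fin d → ℝ) → ℝ} (hC : IsCopula d C)
    {i j : Fin d} (hij : i ≠ j) (b : Fin d → ℝ) (hb : ∀ k, b k ∈ Set.Icc (0:ℝ) 1)
    {ci cj : ℝ} (hci : 0 ≤ ci) (hcib : ci ≤ b i) (hcj : 0 ≤ cj) (hcjb : cj ≤ b j) :
    C (Function.update b i ci) + C (Function.update b j cj) ≤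
      C b + C (Function.update (Function.update b i ci) j cj) := by
  set a : Fin d → ℝ := fun k => if k = i then ci else if k = j then cj else 0 with ha
  have hai : ∀ k, a k ∈ Set.Icc (0:ℝ) 1 := by
    intro k
    simp only [ha]
    split_ifs with h1 h2
    · exact ⟨hci, hcib.trans (hb i).2⟩
    · exact ⟨hcj, hcjb.trans (hb j).2⟩
    · exact ⟨le_refl 0, zero_le_one⟩
  have hab : ∀ k, a k ≤ b k := by
    intro k
    simp only [ha]
    split_ifs with h1 h2
    · subst h1; exact hcib
    · subst h2; exact hcjb
    · exact (hb k).1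
  have H := hC.2.2 a b hai hb hab
  -- the four relevant vertex sets
  set S0 : Finset (Fin d) := (Finset.univ.erase i).erase j with hS0
  set Si : Finset (Fin d) := Finset.univ.erase j with hSi  -- contains i, misses j
  set Sj : Finset (Fin d) := Finset.univ.erase i with hSj
  have hjSi : j ∉ Si := notMem_erase _ _
  have hiSj : i ∉ Sj := notMem_erase _ _
  have hiSi : i ∈ Si := mem_erase.2 ⟨hij, mem_univ _⟩
  have hjSj : j ∈ Sj := mem_erase.2 ⟨hij.symm, mem_univ _⟩
  have hiS0 : i ∉ S0 := fun h => hiSj (mem_of_mem_erase h)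
  have hjS0 : j ∉ S0 := notMem_erase _ _
  have huniv_ne_Si : (Finset.univ : Finset (Fin d)) ≠ Si := fun h => hjSi (h ▸ mem_univ j)
  have huniv_ne_Sj : (Finset.univ : Finset (Fin d)) ≠ Sj := fun h => hiSj (h ▸ mem_univ i)
  have huniv_ne_S0 : (Finset.univ : Finset (Fin d)) ≠ S0 := fun h => hiS0 (h ▸ mem_univ i)
  have hSi_ne_Sj : Si ≠ Sj := fun h => hiSj (h ▸ hiSi)
  have hSi_ne_S0 : Si ≠ S0 := fun h => hiS0 (h ▸ hiSi)
  have hSj_ne_S0 : Sj ≠ S0 := fun h => hjS0 (h ▸ hjSj)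
  set E : Finset (Finset (Fin d)) := {Finset.univ, Si, Sj, S0} with hE
  set F : Finset (Fin d) → ℝ :=
    fun S => (-1 : ℝ) ^ (d - S.card) * C (fun k => if k ∈ S then b k else a k) with hF
  -- vertices in [0,1]
  have hvert : ∀ S : Finset (Fin d), ∀ k, (if k ∈ S then b k else a k) ∈ Set.Icc (0:ℝ) 1 := by
    intro S k; split_ifs; exacts [hb k, hai k]
  -- terms outside E vanish
  have hzero : ∀ S : Finset (Fin d), S ∉ E → F S = 0 := by
    intro S hSE
    have : ∃ k, k ≠ i ∧ k ≠ j ∧ k ∉ S := by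
      by_contra hcon
      push_neg at hcon
      apply hSE
      simp only [hE, mem_insert, mem_singleton]
      by_cases hi' : i ∈ S <;> by_cases hj' : j ∈ S
      · left; ext k; simp only [mem_univ, iff_true]
        by_cases hk : k = i; · exact hk ▸ hi'
        by_cases hk' : k = j; · exact hk' ▸ hj'
        exact hcon k hk hk'
      · right; left; rw [hSi]; ext k
        simp only [mem_erase, mem_univ, and_true]
        constructor
        · intro hk; exact fun h => hj' (h ▸ hk)
        · intro hk
          by_cases hk' : k = i; · exact hk' ▸ hi'
          exact hcon k hk' hk
      · right; right; left; rw [hSj]; ext k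
        simp only [mem_erase, mem_univ, and_true]
        constructor
        · intro hk; exact fun h => hi' (h ▸ hk)
        · intro hk
          by_cases hk' : k = j; · exact hk' ▸ hj'
          exact hcon k hk hk'
      · right; right; right; ext k
        rw [hS0, hSj]
        simp only [mem_erase, mem_univ, and_true]
        constructor
        · intro hk; exact ⟨fun h => hj' (h ▸ hk), fun h => hi' (h ▸ hk)⟩
        · rintro ⟨hk1, hk2⟩; exact hcon k hk2 hk1
    obtain ⟨k, hk1, hk2, hk3⟩ := this
    have : C (fun k => if k ∈ S then b k else a k) = 0 := by
      apply hC.1 _ (hvert S)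
      exact ⟨k, by simp [hk3, ha, hk1, hk2]⟩
    simp [hF, this]
  have hsum : ∑ S : Finset (Fin d), F S = ∑ S ∈ E, F S := by
    rw [← Finset.sum_subset (Finset.subset_univ E)]
    intro S _ hS; exact hzero S hS
  have hEsum : ∑ S ∈ E, F S = F Finset.univ + F Si + F Sj + F S0 := by
    rw [hE]
    rw [Finset.sum_insert (by simp [mem_insert, mem_singleton, huniv_ne_Si, huniv_ne_Sj, huniv_ne_S0])]
    rw [Finset.sum_insert (by simp [mem_insert, mem_singleton, hSi_ne_Sj, hSi_ne_S0])]
    rw [Finset.sum_insert (by simp [mem_singleton, hSj_ne_S0])]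
    rw [Finset.sum_singleton]
    ring
  -- cards
  have hd1 : (1:ℕ) ≤ d := by omega
  have hcard_univ : (Finset.univ : Finset (Fin d)).card = d := by simp
  have hcard_Si : Si.card = d - 1 := by rw [hSi, card_erase_of_mem (mem_univ j)]; simp
  have hcard_Sj : Sj.card = d - 1 := by rw [hSj, card_erase_of_mem (mem_univ i)]; simp
  have hcard_S0 : S0.card = d - 2 := by
    rw [hS0, card_erase_of_mem hjSj, hSj, card_erase_of_mem (mem_univ i)]
    simp; omega
  -- vertices
  have hv_univ : (fun k => if k ∈ (Finset.univ : Finset (Fin d)) then b k else a k) = b := by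
    funext k; simp
  have hv_Si : (fun k => if k ∈ Si then b k else a k) = Function.update b j cj := by
    funext k
    by_cases hk : k = j
    · subst hk; simp [hjSi, ha, hij.symm, Function.update_self]
    · simp [hSi, mem_erase, hk, Function.update_of_ne hk]
  have hv_Sj : (fun k => if k ∈ Sj then b k else a k) = Function.update b i ci := by
    funext k
    by_cases hk : k = i
    · subst hk; simp [hiSj, ha, Function.update_self]
    · simp [hSj, mem_erase, hk, Function.update_of_ne hk]
  have hv_S0 : (fun k => if k ∈ S0 then b k else a k) =
      Function.update (Function.update b i ci) j cj := by
    funext k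
    by_cases hk : k = j
    · subst hk; simp [hjS0, ha, hij.symm, Function.update_self]
    · by_cases hk' : k = i
      · subst hk'; simp [hiS0, ha, Function.update_of_ne hk, Function.update_self]
      · have : k ∈ S0 := by rw [hS0, hSj]; simp [mem_erase, hk, hk']
        simp [this, Function.update_of_ne hk, Function.update_of_ne hk']
  have e1 : d - (Finset.univ : Finset (Fin d)).card = 0 := by rw [hcard_univ]; omega
  have e2 : d - Si.card = 1 := by rw [hcard_Si]; omega
  have e3 : d - Sj.card = 1 := by rw [hcard_Sj]; omega
  have e4 : d - S0.card = 2 := by rw [hcard_S0]; omega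
  rw [hsum, hEsum] at H
  simp only [hF, e1, e2, e3, e4, hv_univ, hv_Si, hv_Sj, hv_S0, pow_zero, pow_one, pow_two] at H
  nlinarith [H]

/-- Lowering one coordinate decreases a copula. -/
lemma mono_update {d : ℕ} (hd : 2 ≤ d) {C : (Fin d → ℝ) → ℝ} (hC : IsCopula d C)
    (v : Fin d → ℝ) (hv : ∀ k, v k ∈ Set.Icc (0:ℝ) 1) (i : Fin d)
    {c : ℝ} (hc : 0 ≤ c) (hcv : c ≤ v i) :
    C (Function.update v i c) ≤ C v := by
  haveI : Nontrivial (Fin d) := Fin.nontrivial_iff_two_le.mpr hd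
  obtain ⟨j, hj⟩ := exists_ne i
  have H := box2 hd hC hj.symm v hv hc hcv (le_refl 0) (hv j).1
  have h1 : C (Function.update v j 0) = 0 := by
    apply hC.1
    · intro k
      by_cases hk : k = j
      · subst hk; simp [Function.update_self]
      · rw [Function.update_of_ne hk]; exact hv k
    · exact ⟨j, Function.update_self _ _ _⟩
  have h2 : C (Function.update (Function.update v i c) j 0) = 0 := by
    apply hC.1
    · intro k
      by_cases hk : k = j
      · subst hk; simp [Function.update_self]
      · rw [Function.update_of_ne hk]
        by_cases hk' : k = i
        · subst hk'; rw [Function.update_self]; exact ⟨hc, hcv.trans (hv _).2⟩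
        · rw [Function.update_of_ne hk']; exact hv k
    · exact ⟨j, Function.update_self _ _ _⟩
  rw [h1, h2] at H
  linarith

/-- Raising coordinate `j` to 1 increases the `i`-increment. -/
lemma step_one {d : ℕ} (hd : 2 ≤ d) {C : (Fin d → ℝ) → ℝ} (hC : IsCopula d C)
    {i j : Fin d} (hij : i ≠ j) (v : Fin d → ℝ) (hv : ∀ k, v k ∈ Set.Icc (0:ℝ) 1)
    {w : ℝ} (hw : v i ≤ w) (hw1 : w ≤ 1) :
    C (Function.update v i w) - C v ≤
      C (Function.update (Function.update v j 1) i w) - C (Function.update v j 1) := by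
  set b := Function.update (Function.update v j 1) i w with hb
  have hbIcc : ∀ k, b k ∈ Set.Icc (0:ℝ) 1 := by
    intro k
    by_cases hk : k = i
    · subst hk; rw [hb, Function.update_self]; exact ⟨le_trans (hv _).1 hw, hw1⟩
    · rw [hb, Function.update_of_ne hk]
      by_cases hk' : k = j
      · subst hk'; rw [Function.update_self]; exact ⟨zero_le_one, le_refl 1⟩
      · rw [Function.update_of_ne hk']; exact hv k
  have hbi : b i = w := by rw [hb, Function.update_self]
  have hbj : b j = 1 := by rw [hb, Function.update_of_ne hij.symm, Function.update_self]
  have H := box2 hd hC hij b hbIcc (hv i).1 (by rw [hbi]; exact hw) (hv j).1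
    (by rw [hbj]; exact (hv j).2)
  have eq1 : Function.update b i (v i) = Function.update v j 1 := by
    rw [hb, Function.update_idem]
    have h' : v i = (Function.update v j 1) i := (Function.update_of_ne hij 1 v).symm
    rw [h', Function.update_eq_self]
  have eq2 : Function.update b j (v j) = Function.update v i w := by
    rw [hb, Function.update_comm hij, Function.update_idem, Function.update_eq_self]
  rw [eq1] at H
  rw [eq2] at H
  rw [Function.update_idem, Function.update_eq_self] at H
  linarith

lemma lip_update {d : ℕ} (hd : 2 ≤ d) {C : (Fin d → ℝ) → ℝ} (hC : IsCopula d C)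
    (v : Fin d → ℝ) (hv : ∀ k, v k ∈ Set.Icc (0:ℝ) 1) (i : Fin d)
    {w : ℝ} (hw : v i ≤ w) (hw1 : w ≤ 1) :
    C (Function.update v i w) - C v ≤ w - v i := by
  classical
  have step : ∀ T : Finset (Fin d), i ∉ T →
      C (Function.update v i w) - C v ≤
        C (Function.update (fun k => if k ∈ T then 1 else v k) i w) -
          C (fun k => if k ∈ T then 1 else v k) := by
    intro T
    induction T using Finset.induction_on with
    | empty =>
      intro _
      have h0 : (fun k => if k ∈ (∅ : Finset (Fin d)) then 1 else v k) = v := by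
        funext k; simp
      rw [h0]
    | @insert j T hjT ih =>
      intro hiT
      have hij : i ≠ j := fun h => hiT (h ▸ Finset.mem_insert_self j T)
      have hiT' : i ∉ T := fun h => hiT (Finset.mem_insert_of_mem h)
      set v' : Fin d → ℝ := fun k => if k ∈ T then 1 else v k with hv'
      have hv'Icc : ∀ k, v' k ∈ Set.Icc (0:ℝ) 1 := by
        intro k; rw [hv']; dsimp only; split_ifs
        · exact ⟨zero_le_one, le_refl 1⟩
        · exact hv k
      have hv'i : v' i = v i := by rw [hv']; simp [hiT']
      have hkey : (fun k => if k ∈ insert j T then 1 else v k) = Function.update v' j 1 := by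
        funext k
        by_cases hk : k = j
        · subst hk; simp [Function.update_self]
        · simp [hv', Function.update_of_ne hk, Finset.mem_insert, hk]
      rw [hkey]
      refine (ih hiT').trans ?_
      exact step_one hd hC hij v' hv'Icc (hv'i ▸ hw) hw1
  have hfin := step (Finset.univ.erase i) (Finset.notMem_erase i _)
  set m1 : Fin d → ℝ := fun k => if k ∈ Finset.univ.erase i then 1 else v k with hm
  have hm1Icc : ∀ k, m1 k ∈ Set.Icc (0:ℝ) 1 := by
    intro k; rw [hm]; dsimp only; split_ifs
    · exact ⟨zero_le_one, le_refl 1⟩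
    · exact hv k
  have hm1 : C m1 = v i := by
    have h := hC.2.1 m1 hm1Icc i (by
      intro k hk; rw [hm]; simp [Finset.mem_erase, hk])
    rw [h, hm]; simp
  have hm2 : C (Function.update m1 i w) = w := by
    have h := hC.2.1 (Function.update m1 i w) (by
      intro k
      by_cases hk : k = i
      · subst hk; rw [Function.update_self]; exact ⟨le_trans (hv _).1 hw, hw1⟩
      · rw [Function.update_of_ne hk]; exact hm1Icc k) i (by
      intro k hk
      rw [Function.update_of_ne hk, hm]; simp [Finset.mem_erase, hk])
    rw [h, Function.update_self]
  rw [hm1, hm2] at hfin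
  exact hfin

/-- Global monotonicity and Lipschitz property of copulas. -/
lemma copula_mono_lip {d : ℕ} (hd : 2 ≤ d) {C : (Fin d → ℝ) → ℝ} (hC : IsCopula d C)
    (a b : Fin d → ℝ) (ha : ∀ k, a k ∈ Set.Icc (0:ℝ) 1) (hb : ∀ k, b k ∈ Set.Icc (0:ℝ) 1)
    (hab : ∀ k, a k ≤ b k) :
    C a ≤ C b ∧ C b - C a ≤ ∑ k, (b k - a k) := by
  classical
  have main : ∀ S : Finset (Fin d),
      C a ≤ C (fun k => if k ∈ S then b k else a k) ∧
      C (fun k => if k ∈ S then b k else a k) - C a ≤ ∑ k ∈ S, (b k - a k) := by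
    intro S
    induction S using Finset.induction_on with
    | empty =>
      have h0 : (fun k => if k ∈ (∅ : Finset (Fin d)) then b k else a k) = a := by
        funext k; simp
      rw [h0]; simp
    | @insert j S hjS ih =>
      set mS : Fin d → ℝ := fun k => if k ∈ S then b k else a k with hmS
      have hmSIcc : ∀ k, mS k ∈ Set.Icc (0:ℝ) 1 := by
        intro k; rw [hmS]; dsimp only; split_ifs; exacts [hb k, ha k]
      have hmSj : mS j = a j := by rw [hmS]; simp [hjS]
      have hkey : (fun k => if k ∈ insert j S then b k else a k) =
          Function.update mS j (b j) := by
        funext k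
        by_cases hk : k = j
        · subst hk; simp [Function.update_self]
        · simp [hmS, Function.update_of_ne hk, Finset.mem_insert, hk]
      rw [hkey]
      have hlip := lip_update hd hC mS hmSIcc j (hmSj ▸ hab j) (hb j).2
      have hmono : C mS ≤ C (Function.update mS j (b j)) := by
        have := mono_update hd hC (Function.update mS j (b j)) (by
          intro k
          by_cases hk : k = j
          · subst hk; rw [Function.update_self]; exact hb k
          · rw [Function.update_of_ne hk]; exact hmSIcc k) j
          (c := a j) (ha j).1 (by rw [Function.update_self]; exact hab j)
        rw [Function.update_idem, ← hmSj, Function.update_eq_self] at this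
        exact this
      constructor
      · exact ih.1.trans hmono
      · rw [Finset.sum_insert hjS, hmSj] at *
        linarith [ih.2]
  have h := main Finset.univ
  have huniv : (fun k => if k ∈ (Finset.univ : Finset (Fin d)) then b k else a k) = b := by
    funext k; simp
  rw [huniv] at h
  exact h

/-- j-th element of a strict mono map Fin q → Fin p grows at least linearly. -/
lemma strictMono_fin_bound {q p : ℕ} (g : Fin q → Fin p) (hg : StrictMono g) :
    ∀ n : ℕ, ∀ a b : Fin q, (b : ℕ) = (a : ℕ) + n → (g a : ℕ) + n ≤ (g b : ℕ) := by
  intro n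
  induction n with
  | zero => intro a b h; have : a = b := Fin.ext (by omega); subst this; omega
  | succ n ih =>
    intro a b h
    have hb' : ((a : ℕ) + n) < q := by have := b.isLt; omega
    set b' : Fin q := ⟨(a : ℕ) + n, hb'⟩ with hb'def
    have h1 := ih a b' rfl
    have h2 : g b' < g b := hg (by rw [Fin.lt_def]; simp [hb'def]; omega)
    have := Fin.lt_def.mp h2
    omega

/-- Sum of `f` over any small subset is at most the sum over the top segment. -/
lemma sum_le_top_segment {p : ℕ} (m : ℕ) (hm : m ≤ p) (f : Fin p → ℝ)
    (hf0 : ∀ k, 0 ≤ f k) (hfm : Monotone f) (Q : Finset (Fin p)) (hQ : Q.card ≤ p - m) :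
    ∑ k ∈ Q, f k ≤ ∑ k ∈ Finset.univ.filter (fun k : Fin p => m ≤ (k : ℕ)), f k := by
  classical
  set q := Q.card with hq
  rcases Nat.eq_zero_or_pos q with h0 | hqpos
  · have hQ0 : Q = ∅ := Finset.card_eq_zero.mp (by omega)
    rw [hQ0]
    simp only [Finset.sum_empty]
    exact Finset.sum_nonneg fun k _ => hf0 k
  · set g := Q.orderEmbOfFin hq.symm with hg
    have himg : Finset.univ.image g = Q := by
      ext k
      simp only [Finset.mem_image, Finset.mem_univ, true_and]
      constructor
      · rintro ⟨j, rfl⟩; exact Finset.orderEmbOfFin_mem Q hq.symm j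
      · intro hk
        have : k ∈ Set.range g := by rw [Finset.range_orderEmbOfFin]; exact hk
        obtain ⟨j, hj⟩ := this
        exact ⟨j, hj⟩
    have hsum1 : ∑ k ∈ Q, f k = ∑ j : Fin q, f (g j) := by
      rw [← himg, Finset.sum_image (fun x _ y _ h => g.injective h)]
    have hbound : ∀ j : Fin q, (g j : ℕ) ≤ p - q + j := by
      intro j
      have hql : q - 1 < q := by omega
      have h := strictMono_fin_bound g g.strictMono ((q - 1) - (j : ℕ)) j ⟨q - 1, hql⟩
        (by simp; omega)
      have := (g ⟨q - 1, hql⟩).isLt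
      omega
    have hqp : q ≤ p := hq ▸ (Finset.card_le_card (Finset.subset_univ Q)).trans (by simp)
    have hsum2 : ∀ j : Fin q, f (g j) ≤ f ⟨p - q + j, by omega⟩ :=
      fun j => hfm (by rw [Fin.le_def]; exact hbound j)
    calc ∑ k ∈ Q, f k = ∑ j : Fin q, f (g j) := hsum1
      _ ≤ ∑ j : Fin q, f ⟨p - q + (j : ℕ), by omega⟩ := Finset.sum_le_sum fun j _ => hsum2 j
      _ = ∑ k ∈ Finset.univ.image (fun j : Fin q => (⟨p - q + (j : ℕ), by omega⟩ : Fin p)), f k := by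
          rw [Finset.sum_image]
          intro x _ y _ h
          simp only [Fin.mk.injEq] at h
          exact Fin.ext (by omega)
      _ ≤ ∑ k ∈ Finset.univ.filter (fun k : Fin p => m ≤ (k : ℕ)), f k := by
          apply Finset.sum_le_sum_of_subset_of_nonneg
          · intro k hk
            simp only [Finset.mem_image, Finset.mem_univ, true_and] at hk
            obtain ⟨j, rfl⟩ := hk
            simp only [Finset.mem_filter, Finset.mem_univ, true_and]
            omega
          · intro k _ _; exact hf0 k

lemma key_perm_bound (p : ℕ) (hp2 : 2 ≤ p) (x : Fin p → ℝ) (hx : Monotone x)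
    (σ : Equiv.Perm (Fin p)) :
    ∑ k : Fin p, max (x k - x (σ k)) 0 ≤
      ∑ k ∈ Finset.univ.filter (fun k : Fin p => (p + 1) / 2 ≤ (k : ℕ)),
        (x k - x ⟨0, by omega⟩) := by
  classical
  set z0 : Fin p := ⟨0, by omega⟩ with hz0
  set f : Fin p → ℝ := fun k => x k - x z0 with hf
  have hxz0 : ∀ k, x z0 ≤ x k := fun k => hx (by rw [Fin.le_def]; exact Nat.zero_le _)
  have hf0 : ∀ k, 0 ≤ f k := fun k => sub_nonneg.mpr (hxz0 k)
  have hfm : Monotone f := fun a b hab => by simp only [hf]; linarith [hx hab]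
  set m : ℕ := (p + 1) / 2 with hm'
  have hm : m ≤ p := by omega
  set A : Finset (Fin p) := Finset.univ.filter (fun k => x (σ k) < x k) with hA
  have hsplit : ∑ k : Fin p, max (x k - x (σ k)) 0 = ∑ k ∈ A, (x k - x (σ k)) := by
    rw [hA, Finset.sum_filter]
    apply Finset.sum_congr rfl
    intro k _
    rcases lt_or_ge (x (σ k)) (x k) with h | h
    · simp [h, max_eq_left (le_of_lt (sub_pos.mpr h))]
    · simp [not_lt.mpr h, max_eq_right (sub_nonpos.mpr h)]
  rw [hsplit]
  set B : Finset (Fin p) := A.image σ with hB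
  have hcardB : B.card = A.card := Finset.card_image_of_injective _ σ.injective
  have hAB : ∑ k ∈ A, x (σ k) = ∑ j ∈ B, x j := by
    rw [hB, Finset.sum_image (fun a _ b _ h => σ.injective h)]
  set t := A.card with ht
  rcases le_or_gt t (p - m) with hcase | hcase
  · -- small A : bound by sum over A
    have h1 : ∑ k ∈ A, (x k - x (σ k)) ≤ ∑ k ∈ A, f k := by
      apply Finset.sum_le_sum
      intro k _
      simp only [hf]
      linarith [hxz0 (σ k)]
    exact h1.trans (sum_le_top_segment m hm f hf0 hfm A hcase)
  · -- large A : bound via complement of B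
    have hcardBc : Bᶜ.card = p - t := by
      rw [Finset.card_compl, hcardB, Fintype.card_fin]
    have hcardAc : Aᶜ.card = p - t := by rw [Finset.card_compl, Fintype.card_fin]
    have h1 : ∑ k ∈ A, (x k - x (σ k)) = ∑ k ∈ Bᶜ, x k - ∑ k ∈ Aᶜ, x k := by
      rw [Finset.sum_sub_distrib, hAB]
      have e1 : ∑ k ∈ A, x k = ∑ k : Fin p, x k - ∑ k ∈ Aᶜ, x k := by
        rw [← Finset.sum_add_sum_compl A x]; ring
      have e2 : ∑ k ∈ B, x k = ∑ k : Fin p, x k - ∑ k ∈ Bᶜ, x k := by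
        rw [← Finset.sum_add_sum_compl B x]; ring
      rw [e1, e2]; ring
    have h2 : ∑ k ∈ Aᶜ, x k ≥ (p - t : ℕ) * x z0 := by
      calc ∑ k ∈ Aᶜ, x k ≥ ∑ _k ∈ Aᶜ, x z0 := Finset.sum_le_sum fun k _ => hxz0 k
        _ = (p - t : ℕ) * x z0 := by rw [Finset.sum_const, hcardAc, nsmul_eq_mul]
    have h3 : ∑ k ∈ Bᶜ, f k = ∑ k ∈ Bᶜ, x k - (p - t : ℕ) * x z0 := by
      simp only [hf, Finset.sum_sub_distrib, Finset.sum_const, hcardBc, nsmul_eq_mul]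
    have h4 : ∑ k ∈ A, (x k - x (σ k)) ≤ ∑ k ∈ Bᶜ, f k := by
      rw [h1, h3]; linarith
    have hcard' : Bᶜ.card ≤ p - m := by
      rw [hcardBc]
      have htp : t ≤ p := ht ▸ (Finset.card_le_card (Finset.subset_univ A)).trans (by simp)
      omega
    exact h4.trans (sum_le_top_segment m hm f hf0 hfm Bᶜ hcard')

/-- Let `i_1 < ⋯ < i_p` be exactly the non-fixed points of `π` (here enumerated in
increasing order by `s.orderIsoOfFin`, where `s` is the set of non-fixed points and
`p = s.card ≥ 2`). Then `|C(u) − C(u_π)| ≤ Σ_{k = ⌈p/2⌉+1}^{p} (u_{i_k} − u_{i_1})`;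
0-indexed, the sum runs over the `k` with `⌈p/2⌉ = (p+1)/2 ≤ k ≤ p − 1`. -/
theorem improved_bound_nonfixed (d : ℕ) (hd : 2 ≤ d)
    (u : Fin d → ℝ) (hu : ∀ i, u i ∈ Set.Icc (0:ℝ) 1)
    (hmono : ∀ i j : Fin d, i ≤ j → u i ≤ u j)
    (C : (Fin d → ℝ) → ℝ) (hC : IsCopula d C)
    (π : Equiv.Perm (Fin d))
    (s : Finset (Fin d)) (hs : s = Finset.univ.filter (fun i => π i ≠ i))
    (p : ℕ) (hp : s.card = p) (hp2 : 2 ≤ p) :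
    |C u - C (u ∘ π)| ≤
      ∑ k ∈ Finset.univ.filter (fun k : Fin p => (p + 1) / 2 ≤ (k : ℕ)),
        (u (s.orderIsoOfFin hp k) - u (s.orderIsoOfFin hp ⟨0, by omega⟩)) := by
  classical
  have huπ : ∀ i, (u ∘ π) i ∈ Set.Icc (0:ℝ) 1 := fun i => hu (π i)
  set v : Fin d → ℝ := fun i => min (u i) (u (π i)) with hv
  have hvIcc : ∀ i, v i ∈ Set.Icc (0:ℝ) 1 := fun i =>
    ⟨le_min (hu i).1 (hu (π i)).1, (min_le_left _ _).trans (hu i).2⟩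
  have hvu : ∀ i, v i ≤ u i := fun i => min_le_left _ _
  have hvuπ : ∀ i, v i ≤ (u ∘ π) i := fun i => min_le_right _ _
  have h1 := copula_mono_lip hd hC v u hvIcc hu hvu
  have h2 := copula_mono_lip hd hC v (u ∘ π) hvIcc huπ hvuπ
  set T := ∑ k : Fin d, max (u k - u (π k)) 0 with hT
  have hT1 : ∑ k : Fin d, (u k - v k) = T := by
    apply Finset.sum_congr rfl
    intro k _
    simp only [hv]
    rcases le_total (u k) (u (π k)) with h | h
    · rw [min_eq_left h, max_eq_right (sub_nonpos.mpr h), sub_self]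
    · rw [min_eq_right h, max_eq_left (sub_nonneg.mpr h)]
  have hT2 : ∑ k : Fin d, ((u ∘ π) k - v k) = T := by
    have e1 : ∀ k : Fin d, (u ∘ π) k - v k = max (u (π k) - u k) 0 := by
      intro k
      simp only [hv, Function.comp]
      rcases le_total (u k) (u (π k)) with h | h
      · rw [min_eq_left h, max_eq_left (sub_nonneg.mpr h)]
      · rw [min_eq_right h, max_eq_right (sub_nonpos.mpr h), sub_self]
    rw [Finset.sum_congr rfl (fun k _ => e1 k)]
    have e2 : T - ∑ k : Fin d, max (u (π k) - u k) 0 = 0 := by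
      rw [hT, ← Finset.sum_sub_distrib]
      have e3 : ∀ k : Fin d, max (u k - u (π k)) 0 - max (u (π k) - u k) 0
          = u k - u (π k) := by
        intro k
        rw [show u (π k) - u k = -(u k - u (π k)) by ring]
        exact max_zero_sub_max_neg_zero_eq_self _
      rw [Finset.sum_congr rfl (fun k _ => e3 k), Finset.sum_sub_distrib]
      rw [Equiv.sum_comp π u, sub_self]
    linarith
  have habs : |C u - C (u ∘ π)| ≤ T := by
    rw [abs_sub_le_iff]
    constructor
    · calc C u - C (u ∘ π) ≤ C u - C v := by linarith [h2.1]
        _ ≤ ∑ k : Fin d, (u k - v k) := h1.2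
        _ = T := hT1
    · calc C (u ∘ π) - C u ≤ C (u ∘ π) - C v := by linarith [h1.1]
        _ ≤ ∑ k : Fin d, ((u ∘ π) k - v k) := h2.2
        _ = T := hT2
  -- reindex over s
  have hmem : ∀ k : Fin d, k ∈ s ↔ π k ∈ s := by
    intro k
    rw [hs]
    simp only [Finset.mem_filter, Finset.mem_univ, true_and]
    constructor
    · intro h hcon; exact h (π.injective hcon)
    · intro h hcon; exact h (congrArg _ hcon)
  set e := s.orderIsoOfFin hp with he
  set σp : Equiv.Perm {k : Fin d // k ∈ s} := π.subtypePerm (fun k => (hmem k).symm) with hσp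
  set σ : Equiv.Perm (Fin p) := (e.toEquiv.trans σp).trans e.toEquiv.symm with hσ
  set x : Fin p → ℝ := fun k => u (e k) with hx
  have hxmono : Monotone x := by
    intro a b hab
    exact hmono _ _ (Subtype.coe_le_coe.mpr (e.monotone hab))
  have hπe : ∀ k : Fin p, π ((e k : Fin d)) = ((e (σ k) : Fin d)) := by
    intro k
    have h1 : e (σ k) = σp (e.toEquiv k) := e.toEquiv.apply_symm_apply _
    rw [h1]
    rfl
  have hTs : T = ∑ k : Fin p, max (x k - x (σ k)) 0 := by
    rw [hT]
    rw [← Finset.sum_subset (Finset.subset_univ s) (by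
      intro k _ hk
      have : π k = k := by
        rw [hs] at hk
        simp only [Finset.mem_filter, Finset.mem_univ, true_and, not_not] at hk
        exact hk
      rw [this, sub_self, max_self])]
    rw [← Finset.sum_coe_sort s (fun k => max (u k - u (π k)) 0)]
    rw [← Equiv.sum_comp e.toEquiv (fun i : {k : Fin d // k ∈ s} => max (u i - u (π i)) 0)]
    apply Finset.sum_congr rfl
    intro k _
    have := hπe k
    simp only [hx]
    rw [show π ((e.toEquiv k : Fin d)) = ((e (σ k) : Fin d)) from this]
    rfl
  rw [hTs] at habs
  exact habs.trans (key_perm_bound p hp2 x hxmono σ)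
end

section
/- Let d ≥ 2 and let u ∈ [0,1]^d with u_1 ≤ ⋯ ≤ u_d be a point such that |C(u) − C(u_π)| = (d−1)/(d+1) for some d-copula C and some permutation π ∈ S_d. Then, writing ũ_i := u_i − (d−1)/(d+1), one has 0 ≤ ũ_i ≤ 2/(d+1) for all i, and Σ_{i = ⌈d/2⌉+1}^{d} ũ_i = (d−1)/(d+1). -/
open Finset


lemma cop_step_mono {d : ℕ} {C : (Fin d → ℝ) → ℝ} (hC : IsCopula d C)
    {x : Fin d → ℝ} (hx : ∀ i, x i ∈ Set.Icc (0:ℝ) 1)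
    (i : Fin d) {y : ℝ} (hxy : x i ≤ y) (hy : y ≤ 1) :
    C x ≤ C (fun k => if k = i then y else x k) := by
  obtain ⟨hg, hm, hincr⟩ := hC
  classical
  set a : Fin d → ℝ := fun k => if k = i then x i else 0 with ha
  set b : Fin d → ℝ := fun k => if k = i then y else x k with hb
  have hax : ∀ j, a j ∈ Set.Icc (0:ℝ) 1 := by
    intro j; by_cases h : j = i
    · simpa [a, h] using hx i
    · simp only [a, if_neg h]; norm_num
  have hbx : ∀ j, b j ∈ Set.Icc (0:ℝ) 1 := by
    intro j; by_cases h : j = i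
    · simp only [b, if_pos h]; exact ⟨le_trans (hx i).1 hxy, hy⟩
    · simpa [b, h] using hx j
  have hab : ∀ j, a j ≤ b j := by
    intro j; by_cases h : j = i
    · simp only [a, b, if_pos h]; exact hxy
    · simp only [a, b, if_neg h]; exact (hx j).1
  have h0 := hincr a b hax hbx hab
  set f : Finset (Fin d) → ℝ :=
    fun S => (-1:ℝ)^(d - S.card) * C (fun k => if k ∈ S then b k else a k) with hf
  have hzero : ∀ S ∈ (univ : Finset (Finset (Fin d))),
      S ∉ ({univ, univ.erase i} : Finset (Finset (Fin d))) → f S = 0 := by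
    intro S _ hS
    simp only [mem_insert, mem_singleton] at hS
    push_neg at hS
    obtain ⟨hS1, hS2⟩ := hS
    have hex : ∃ r, r ≠ i ∧ r ∉ S := by
      by_contra hcon
      push_neg at hcon
      have hsub : univ.erase i ⊆ S := by
        intro r hr
        exact hcon r (Finset.ne_of_mem_erase hr)
      by_cases hiS : i ∈ S
      · exact hS1 (Finset.eq_univ_of_forall (fun r => by
          by_cases hri : r = i
          · exact hri ▸ hiS
          · exact hsub (Finset.mem_erase.2 ⟨hri, mem_univ r⟩)))
      · refine hS2 (Finset.Subset.antisymm ?_ hsub)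
        intro r hr
        exact Finset.mem_erase.2 ⟨fun h => hiS (h ▸ hr), mem_univ r⟩
    obtain ⟨r, hri, hrS⟩ := hex
    have hCz : C (fun k => if k ∈ S then b k else a k) = 0 := by
      apply hg
      · intro j; by_cases h : j ∈ S
        · simpa [h] using hbx j
        · simpa [h] using hax j
      · exact ⟨r, by simp [hrS, a, hri]⟩
    simp [f, hCz]
  have hsum : ∑ S : Finset (Fin d), f S = f univ + f (univ.erase i) := by
    rw [← Finset.sum_subset (Finset.subset_univ ({univ, univ.erase i} : Finset (Finset (Fin d)))) hzero]
    exact Finset.sum_pair (by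
      intro h
      have : i ∈ univ.erase i := h ▸ mem_univ i
      simp at this)
  have hcu : (univ : Finset (Fin d)).card = d := by simp
  have hce : (univ.erase i).card = d - 1 := by
    rw [Finset.card_erase_of_mem (mem_univ i), hcu]
  have hdpos : 0 < d := i.pos
  have hfu : f univ = C b := by
    simp only [f, hcu, Nat.sub_self, pow_zero, one_mul]
    congr 1
    funext k
    simp
  have hfe : f (univ.erase i) = -(C x) := by
    have h1 : d - (d - 1) = 1 := by omega
    have harg : (fun k => if k ∈ univ.erase i then b k else a k) = x := by
      funext k
      by_cases h : k = i
      · simp [h, a]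
      · simp [h, Finset.mem_erase, b]
    simp only [f, hce, h1, harg, pow_one, neg_one_mul]
  rw [hsum, hfu, hfe] at h0
  linarith

lemma cop_two_box {d : ℕ} {C : (Fin d → ℝ) → ℝ} (hC : IsCopula d C)
    {x : Fin d → ℝ} (hx : ∀ i, x i ∈ Set.Icc (0:ℝ) 1)
    {i j : Fin d} (hij : i ≠ j) {p q r s : ℝ}
    (h0p : 0 ≤ p) (hpq : p ≤ q) (hq1 : q ≤ 1)
    (h0r : 0 ≤ r) (hrs : r ≤ s) (hs1 : s ≤ 1) :
    C (fun k => if k = i then p else if k = j then s else x k)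
      + C (fun k => if k = i then q else if k = j then r else x k)
    ≤ C (fun k => if k = i then q else if k = j then s else x k)
      + C (fun k => if k = i then p else if k = j then r else x k) := by
  obtain ⟨hg, hm, hincr⟩ := hC
  classical
  set a : Fin d → ℝ := fun k => if k = i then p else if k = j then r else 0 with ha
  set b : Fin d → ℝ := fun k => if k = i then q else if k = j then s else x k with hb
  have hax : ∀ l, a l ∈ Set.Icc (0:ℝ) 1 := by
    intro l; by_cases h1 : l = i
    · simp only [a, if_pos h1]; exact ⟨h0p, le_trans hpq hq1⟩
    · by_cases h2 : l = j
      · simp only [a, if_neg h1, if_pos h2]; exact ⟨h0r, le_trans hrs hs1⟩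
      · simp only [a, if_neg h1, if_neg h2]; norm_num
  have hbx : ∀ l, b l ∈ Set.Icc (0:ℝ) 1 := by
    intro l; by_cases h1 : l = i
    · simp only [b, if_pos h1]; exact ⟨le_trans h0p hpq, hq1⟩
    · by_cases h2 : l = j
      · simp only [b, if_neg h1, if_pos h2]; exact ⟨le_trans h0r hrs, hs1⟩
      · simp only [b, if_neg h1, if_neg h2]; exact hx l
  have hab : ∀ l, a l ≤ b l := by
    intro l; by_cases h1 : l = i
    · simp only [a, b, if_pos h1]; exact hpq
    · by_cases h2 : l = j
      · simp only [a, b, if_neg h1, if_pos h2]; exact hrs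
      · simp only [a, b, if_neg h1, if_neg h2]; exact (hx l).1
  have h0 := hincr a b hax hbx hab
  set f : Finset (Fin d) → ℝ :=
    fun S => (-1:ℝ)^(d - S.card) * C (fun k => if k ∈ S then b k else a k) with hf
  set S1 : Finset (Fin d) := univ with hS1
  set S2 : Finset (Fin d) := univ.erase i with hS2
  set S3 : Finset (Fin d) := univ.erase j with hS3
  set S4 : Finset (Fin d) := (univ.erase i).erase j with hS4
  have hiS2 : i ∉ S2 := Finset.notMem_erase i univ
  have hjS3 : j ∉ S3 := Finset.notMem_erase j univ
  have hjS2 : j ∈ S2 := Finset.mem_erase.2 ⟨Ne.symm hij, mem_univ j⟩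
  have hiS3 : i ∈ S3 := Finset.mem_erase.2 ⟨hij, mem_univ i⟩
  have hiS4 : i ∉ S4 := fun h => hiS2 (Finset.mem_of_mem_erase h)
  have hjS4 : j ∉ S4 := Finset.notMem_erase j _
  have hd2 : 2 ≤ d := by
    have h1 := i.isLt
    have h2 := j.isLt
    have h3 : i.val ≠ j.val := fun h => hij (Fin.ext h)
    omega
  have hzero : ∀ S ∈ (univ : Finset (Finset (Fin d))),
      S ∉ ({S1, S2, S3, S4} : Finset (Finset (Fin d))) → f S = 0 := by
    intro S _ hS
    simp only [mem_insert, mem_singleton] at hS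
    push_neg at hS
    obtain ⟨hA, hB, hC', hD⟩ := hS
    have hex : ∃ l, l ≠ i ∧ l ≠ j ∧ l ∉ S := by
      by_contra hcon
      push_neg at hcon
      have hsub : ∀ l : Fin d, l ≠ i → l ≠ j → l ∈ S := fun l h1 h2 => hcon l h1 h2
      by_cases h1 : i ∈ S <;> by_cases h2 : j ∈ S
      · exact hA (Finset.eq_univ_of_forall (fun l => by
          by_cases e1 : l = i; · exact e1 ▸ h1
          by_cases e2 : l = j; · exact e2 ▸ h2
          exact hsub l e1 e2))
      · refine hC' (Finset.Subset.antisymm ?_ ?_)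
        · intro l hl
          exact Finset.mem_erase.2 ⟨fun h => h2 (h ▸ hl), mem_univ l⟩
        · intro l hl
          have := Finset.mem_erase.1 hl
          by_cases e1 : l = i; · exact e1 ▸ h1
          exact hsub l e1 this.1
      · refine hB (Finset.Subset.antisymm ?_ ?_)
        · intro l hl
          exact Finset.mem_erase.2 ⟨fun h => h1 (h ▸ hl), mem_univ l⟩
        · intro l hl
          have := Finset.mem_erase.1 hl
          by_cases e2 : l = j; · exact e2 ▸ h2
          exact hsub l this.1 e2
      · refine hD (Finset.Subset.antisymm ?_ ?_)
        · intro l hl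
          refine Finset.mem_erase.2 ⟨fun h => h2 (h ▸ hl), Finset.mem_erase.2 ⟨fun h => h1 (h ▸ hl), mem_univ l⟩⟩
        · intro l hl
          have e2 := Finset.mem_erase.1 hl
          have e1 := Finset.mem_erase.1 e2.2
          exact hsub l e1.1 e2.1
    obtain ⟨l, hli, hlj, hlS⟩ := hex
    have hCz : C (fun k => if k ∈ S then b k else a k) = 0 := by
      apply hg
      · intro m'; by_cases h : m' ∈ S
        · simpa [h] using hbx m'
        · simpa [h] using hax m'
      · exact ⟨l, by simp [hlS, a, hli, hlj]⟩
    simp [f, hCz]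
  have hcu : (univ : Finset (Fin d)).card = d := by simp
  have hc2 : S2.card = d - 1 := by rw [hS2, Finset.card_erase_of_mem (mem_univ i), hcu]
  have hc3 : S3.card = d - 1 := by rw [hS3, Finset.card_erase_of_mem (mem_univ j), hcu]
  have hc4 : S4.card = d - 2 := by
    rw [hS4, Finset.card_erase_of_mem hjS2, hc2]
    omega
  have hne12 : S1 ≠ S2 := fun h => hiS2 (h ▸ mem_univ i)
  have hne13 : S1 ≠ S3 := fun h => hjS3 (h ▸ mem_univ j)
  have hne14 : S1 ≠ S4 := fun h => hiS4 (h ▸ mem_univ i)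
  have hne23 : S2 ≠ S3 := fun h => hjS3 (h ▸ hjS2)
  have hne24 : S2 ≠ S4 := fun h => hjS4 (h ▸ hjS2)
  have hne34 : S3 ≠ S4 := fun h => hiS4 (h ▸ hiS3)
  have hsum : ∑ S : Finset (Fin d), f S = f S1 + f S2 + f S3 + f S4 := by
    rw [← Finset.sum_subset (Finset.subset_univ ({S1, S2, S3, S4} : Finset (Finset (Fin d)))) hzero]
    rw [Finset.sum_insert (by simp [hne12, hne13, hne14]),
        Finset.sum_insert (by simp [hne23, hne24]),
        Finset.sum_pair hne34]
    ring
  have hf1 : f S1 = C b := by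
    simp only [f, hS1, hcu, Nat.sub_self, pow_zero, one_mul]
    congr 1; funext k; simp
  have hf2 : f S2 = -(C (fun k => if k = i then p else if k = j then s else x k)) := by
    have h1 : d - (d - 1) = 1 := by omega
    have harg : (fun k => if k ∈ S2 then b k else a k)
        = (fun k => if k = i then p else if k = j then s else x k) := by
      funext k
      by_cases e1 : k = i
      · simp [e1, hiS2, a]
      · have : k ∈ S2 := Finset.mem_erase.2 ⟨e1, mem_univ k⟩
        simp [this, b, e1]
    rw [hf]
    simp only [hc2, h1, harg, pow_one, neg_one_mul]
  have hf3 : f S3 = -(C (fun k => if k = i then q else if k = j then r else x k)) := by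
    have h1 : d - (d - 1) = 1 := by omega
    have harg : (fun k => if k ∈ S3 then b k else a k)
        = (fun k => if k = i then q else if k = j then r else x k) := by
      funext k
      by_cases e2 : k = j
      · subst e2
        simp [hjS3, a, Ne.symm hij]
      · have : k ∈ S3 := Finset.mem_erase.2 ⟨e2, mem_univ k⟩
        simp [this, b, e2]
    rw [hf]
    simp only [hc3, h1, harg, pow_one, neg_one_mul]
  have hf4 : f S4 = C (fun k => if k = i then p else if k = j then r else x k) := by
    have h1 : d - (d - 2) = 2 := by omega
    have harg : (fun k => if k ∈ S4 then b k else a k)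
        = (fun k => if k = i then p else if k = j then r else x k) := by
      funext k
      by_cases e1 : k = i
      · simp [e1, hiS4, a]
      · by_cases e2 : k = j
        · simp [e2, hjS4, a, (show k ≠ i from e1)]
        · have : k ∈ S4 := Finset.mem_erase.2 ⟨e2, Finset.mem_erase.2 ⟨e1, mem_univ k⟩⟩
          simp [this, b, e1, e2]
    rw [hf]
    simp only [hc4, h1, harg]
    norm_num
  rw [hsum, hf1, hf2, hf3, hf4] at h0
  have hbeq : b = (fun k => if k = i then q else if k = j then s else x k) := rfl
  rw [hbeq] at h0
  linarith

lemma cop_coord_lip {d : ℕ} {C : (Fin d → ℝ) → ℝ} (hC : IsCopula d C)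
    {x : Fin d → ℝ} (hx : ∀ i, x i ∈ Set.Icc (0:ℝ) 1)
    (i : Fin d) {p q : ℝ} (h0p : 0 ≤ p) (hpq : p ≤ q) (hq1 : q ≤ 1) :
    C (fun k => if k = i then q else x k) - C (fun k => if k = i then p else x k) ≤ q - p := by
  classical
  set g : Finset (Fin d) → ℝ := fun s =>
    C (fun k => if k = i then q else if k ∈ s then 1 else x k)
      - C (fun k => if k = i then p else if k ∈ s then 1 else x k) with hg
  have hstep : ∀ (s : Finset (Fin d)), s ⊆ univ.erase i → g ∅ ≤ g s := by
    intro s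
    induction s using Finset.induction_on with
    | empty => intro _; exact le_refl _
    | @insert j s hjs ih =>
      intro hsub
      have hji : j ≠ i := Finset.ne_of_mem_erase (hsub (mem_insert_self j s))
      have hs : s ⊆ univ.erase i := fun l hl => hsub (mem_insert_of_mem hl)
      refine le_trans (ih hs) ?_
      set x' : Fin d → ℝ := fun k => if k ∈ s then 1 else x k with hx'
      have hx'm : ∀ l, x' l ∈ Set.Icc (0:ℝ) 1 := by
        intro l; by_cases h : l ∈ s
        · simp only [x', if_pos h]; norm_num
        · simpa [x', h] using hx l
      have key := cop_two_box hC hx'm (Ne.symm hji) h0p hpq hq1 (hx j).1 (hx j).2 (le_refl 1)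
      -- identify the four functions
      have e1 : (fun k => if k = i then q else if k = j then (1:ℝ) else x' k)
          = (fun k => if k = i then q else if k ∈ insert j s then 1 else x k) := by
        funext k
        by_cases h1 : k = i
        · simp [h1]
        · by_cases h2 : k = j
          · simp [h1, h2]
          · by_cases h3 : k ∈ s <;> simp [h1, h2, h3, x']
      have e2 : (fun k => if k = i then p else if k = j then (1:ℝ) else x' k)
          = (fun k => if k = i then p else if k ∈ insert j s then 1 else x k) := by
        funext k
        by_cases h1 : k = i
        · simp [h1]
        · by_cases h2 : k = j
          · simp [h1, h2]
          · by_cases h3 : k ∈ s <;> simp [h1, h2, h3, x']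
      have e3 : (fun k => if k = i then q else if k = j then x j else x' k)
          = (fun k => if k = i then q else if k ∈ s then 1 else x k) := by
        funext k
        by_cases h1 : k = i
        · simp [h1]
        · by_cases h2 : k = j
          · subst h2; simp [h1, hjs, x']
          · by_cases h3 : k ∈ s <;> simp [h1, h2, h3, x']
      have e4 : (fun k => if k = i then p else if k = j then x j else x' k)
          = (fun k => if k = i then p else if k ∈ s then 1 else x k) := by
        funext k
        by_cases h1 : k = i
        · simp [h1]
        · by_cases h2 : k = j
          · subst h2; simp [h1, hjs, x']
          · by_cases h3 : k ∈ s <;> simp [h1, h2, h3, x']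
      rw [e1, e2, e3, e4] at key
      simp only [g]
      linarith
  have hfin := hstep (univ.erase i) (Finset.Subset.refl _)
  have hq' : C (fun k => if k = i then q else if k ∈ univ.erase i then 1 else x k) = q := by
    have harg : (fun k => if k = i then q else if k ∈ univ.erase i then (1:ℝ) else x k)
        = (fun k => if k = i then q else 1) := by
      funext k
      by_cases h : k = i
      · simp [h]
      · simp [h, Finset.mem_erase]
    rw [harg]
    have hbox : ∀ l, (fun k => if k = i then q else (1:ℝ)) l ∈ Set.Icc (0:ℝ) 1 := by
      intro l; by_cases h : l = i <;> simp [h]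
      exact ⟨le_trans h0p hpq, hq1⟩
    have := hC.2.1 _ hbox i (fun j hj => by simp [hj])
    simpa using this
  have hp' : C (fun k => if k = i then p else if k ∈ univ.erase i then 1 else x k) = p := by
    have harg : (fun k => if k = i then p else if k ∈ univ.erase i then (1:ℝ) else x k)
        = (fun k => if k = i then p else 1) := by
      funext k
      by_cases h : k = i
      · simp [h]
      · simp [h, Finset.mem_erase]
    rw [harg]
    have hbox : ∀ l, (fun k => if k = i then p else (1:ℝ)) l ∈ Set.Icc (0:ℝ) 1 := by
      intro l; by_cases h : l = i <;> simp [h]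
      exact ⟨h0p, le_trans hpq hq1⟩
    have := hC.2.1 _ hbox i (fun j hj => by simp [hj])
    simpa using this
  have hgu : g (univ.erase i) = q - p := by rw [hg]; simp only []; rw [hq', hp']
  have hg0 : g ∅ = C (fun k => if k = i then q else x k) - C (fun k => if k = i then p else x k) := by
    simp [g]
  rw [hg0, hgu] at hfin
  exact hfin

lemma cop_mono_lip {d : ℕ} {C : (Fin d → ℝ) → ℝ} (hC : IsCopula d C)
    {a b : Fin d → ℝ} (ha : ∀ i, a i ∈ Set.Icc (0:ℝ) 1) (hb : ∀ i, b i ∈ Set.Icc (0:ℝ) 1)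
    (hab : ∀ i, a i ≤ b i) :
    C a ≤ C b ∧ C b ≤ C a + ∑ i, (b i - a i) := by
  classical
  have key : ∀ s : Finset (Fin d),
      C a ≤ C (fun k => if k ∈ s then b k else a k) ∧
      C (fun k => if k ∈ s then b k else a k) ≤ C a + ∑ i ∈ s, (b i - a i) := by
    intro s
    induction s using Finset.induction_on with
    | empty => simp
    | @insert i s his ih =>
      set ms : Fin d → ℝ := fun k => if k ∈ s then b k else a k with hms
      have hmsbox : ∀ l, ms l ∈ Set.Icc (0:ℝ) 1 := by
        intro l; by_cases h : l ∈ s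
        · simpa [ms, h] using hb l
        · simpa [ms, h] using ha l
      have hmsi : ms i = a i := by simp [ms, his]
      have e1 : (fun k => if k ∈ insert i s then b k else a k)
          = (fun k => if k = i then b i else ms k) := by
        funext k
        by_cases h1 : k = i
        · simp [h1]
        · by_cases h2 : k ∈ s <;> simp [h1, h2, ms]
      have e2 : ms = (fun k => if k = i then a i else ms k) := by
        funext k
        by_cases h1 : k = i
        · simp [h1, hmsi]
        · simp [h1]
      have hmono : C ms ≤ C (fun k => if k = i then b i else ms k) := by
        apply cop_step_mono hC hmsbox i (by rw [hmsi]; exact hab i) (hb i).2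
      have hlip : C (fun k => if k = i then b i else ms k)
          - C (fun k => if k = i then a i else ms k) ≤ b i - a i :=
        cop_coord_lip hC hmsbox i (ha i).1 (hab i) (hb i).2
      rw [← e2] at hlip
      constructor
      · rw [e1]; exact le_trans ih.1 hmono
      · rw [e1, Finset.sum_insert his]
        have := ih.2
        linarith
  have h := key univ
  have e : (fun k => if k ∈ (univ : Finset (Fin d)) then b k else a k) = b := by
    funext k; simp
  rw [e] at h
  simpa using h

lemma cop_nonneg {d : ℕ} {C : (Fin d → ℝ) → ℝ} (hC : IsCopula d C) (hd : 0 < d)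
    {x : Fin d → ℝ} (hx : ∀ i, x i ∈ Set.Icc (0:ℝ) 1) : 0 ≤ C x := by
  classical
  set i0 : Fin d := ⟨0, hd⟩
  set z : Fin d → ℝ := fun k => if k = i0 then 0 else x k with hz
  have hzbox : ∀ l, z l ∈ Set.Icc (0:ℝ) 1 := by
    intro l; by_cases h : l = i0
    · simp [z, h]
    · simpa [z, h] using hx l
  have hz0 : C z = 0 := hC.1 z hzbox ⟨i0, by simp [z]⟩
  have := (cop_mono_lip hC hzbox hx (fun l => by
    by_cases h : l = i0
    · subst h; simp [z]; exact (hx i0).1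
    · simp [z, h])).1
  linarith

lemma cop_le {d : ℕ} {C : (Fin d → ℝ) → ℝ} (hC : IsCopula d C)
    {x : Fin d → ℝ} (hx : ∀ i, x i ∈ Set.Icc (0:ℝ) 1) (i : Fin d) : C x ≤ x i := by
  classical
  set b : Fin d → ℝ := fun k => if k = i then x i else 1 with hb
  have hbbox : ∀ l, b l ∈ Set.Icc (0:ℝ) 1 := by
    intro l; by_cases h : l = i
    · simpa [b, h] using hx i
    · simp [b, h]
  have hmono := (cop_mono_lip hC hx hbbox (fun l => by
    by_cases h : l = i
    · subst h; simp [b]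
    · simp [b, h]; exact (hx l).2)).1
  have hmarg : C b = x i := by
    have := hC.2.1 b hbbox i (fun j hj => by simp [b, hj])
    simpa [b] using this
  linarith

lemma cop_frechet {d : ℕ} {C : (Fin d → ℝ) → ℝ} (hC : IsCopula d C) (hd : 0 < d)
    {x : Fin d → ℝ} (hx : ∀ i, x i ∈ Set.Icc (0:ℝ) 1) :
    (∑ i, x i) - ((d : ℝ) - 1) ≤ C x := by
  classical
  set o : Fin d → ℝ := fun _ => 1 with ho
  have hobox : ∀ l, o l ∈ Set.Icc (0:ℝ) 1 := by intro l; simp [o]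
  have h := (cop_mono_lip hC hx hobox (fun l => (hx l).2)).2
  have ho1 : C o = 1 := by
    have := hC.2.1 o hobox ⟨0, hd⟩ (fun j _ => rfl)
    simpa [o] using this
  have hsum : ∑ i, (o i - x i) = (d : ℝ) - ∑ i, x i := by
    rw [Finset.sum_sub_distrib]
    simp [o, Finset.card_fin]
  rw [ho1, hsum] at h
  linarith

lemma cop_onesided {d : ℕ} {C : (Fin d → ℝ) → ℝ} (hC : IsCopula d C)
    {a b : Fin d → ℝ} (ha : ∀ i, a i ∈ Set.Icc (0:ℝ) 1) (hb : ∀ i, b i ∈ Set.Icc (0:ℝ) 1) :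
    C b ≤ C a + ∑ i, max (b i - a i) 0 := by
  classical
  set w : Fin d → ℝ := fun i => min (a i) (b i) with hw
  have hwbox : ∀ l, w l ∈ Set.Icc (0:ℝ) 1 := by
    intro l
    constructor
    · exact le_min (ha l).1 (hb l).1
    · exact le_trans (min_le_left _ _) (ha l).2
  have h1 := (cop_mono_lip hC hwbox hb (fun l => min_le_right _ _)).2
  have h2 := (cop_mono_lip hC hwbox ha (fun l => min_le_left _ _)).1
  have hsum : ∑ i, (b i - w i) = ∑ i, max (b i - a i) 0 := by
    apply Finset.sum_congr rfl
    intro i _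
    rcases le_total (a i) (b i) with h | h
    · simp only [w]; rw [min_eq_left h, max_eq_left (by linarith)]
    · simp only [w]; rw [min_eq_right h, max_eq_right (by linarith)]
      ring
  rw [hsum] at h1
  linarith

lemma card_filter_val {d : ℕ} (p : ℕ → Prop) [DecidablePred p] :
    ((univ : Finset (Fin d)).filter fun i : Fin d => p i.val).card
      = ((Finset.range d).filter p).card := by
  rw [Finset.card_filter, Finset.card_filter,
    Fin.sum_univ_eq_sum_range (fun j => if p j then 1 else 0)]

/-- If the maximal non-exchangeability `(d−1)/(d+1)` is attained at an ordered point `u`,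
then `0 ≤ ũ_i := u_i − (d−1)/(d+1) ≤ 2/(d+1)` for all `i`, and
`Σ_{i = ⌈d/2⌉+1}^{d} ũ_i = (d−1)/(d+1)` (0-indexed, the sum runs over the `i` with
`⌈d/2⌉ = (d+1)/2 ≤ i ≤ d − 1`). -/
theorem max_point_necessary (d : ℕ) (hd : 2 ≤ d)
    (u : Fin d → ℝ) (hu : ∀ i, u i ∈ Set.Icc (0:ℝ) 1)
    (hmono : ∀ i j : Fin d, i ≤ j → u i ≤ u j)
    (C : (Fin d → ℝ) → ℝ) (hC : IsCopula d C)
    (π : Equiv.Perm (Fin d))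
    (hmax : |C u - C (u ∘ π)| = ((d : ℝ) - 1) / ((d : ℝ) + 1)) :
    (∀ i : Fin d, 0 ≤ u i - ((d : ℝ) - 1) / ((d : ℝ) + 1) ∧
      u i - ((d : ℝ) - 1) / ((d : ℝ) + 1) ≤ 2 / ((d : ℝ) + 1)) ∧
    ∑ i ∈ Finset.univ.filter (fun i : Fin d => (d + 1) / 2 ≤ (i : ℕ)),
        (u i - ((d : ℝ) - 1) / ((d : ℝ) + 1)) = ((d : ℝ) - 1) / ((d : ℝ) + 1) := by
  classical
  have hd0 : 0 < d := by omega
  set t : ℝ := ((d : ℝ) - 1) / ((d : ℝ) + 1) with htdef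
  set v : Fin d → ℝ := u ∘ π with hvdef
  have hvbox : ∀ i, v i ∈ Set.Icc (0:ℝ) 1 := fun i => hu (π i)
  set m : ℕ := (d + 1) / 2 with hmdef
  set k : ℕ := d - m with hkdef
  have hm1 : 1 ≤ m := by omega
  have hmd : m ≤ d := by omega
  have hkm : k ≤ m := by omega
  have hmk1 : m ≤ k + 1 := by omega
  have hkd : k < d := by omega
  set i0 : Fin d := ⟨0, hd0⟩ with hi0
  set ik : Fin d := ⟨k, hkd⟩ with hik
  set c : ℝ := u ik with hcdef
  have hne : ((d:ℝ) + 1) ≠ 0 := by positivity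
  -- basic bounds
  have hCu0 : 0 ≤ C u := cop_nonneg hC hd0 hu
  have hCv0 : 0 ≤ C v := cop_nonneg hC hd0 hvbox
  have hCu_le : C u ≤ u i0 := cop_le hC hu i0
  have hCv_le : C v ≤ u i0 := by
    have h := cop_le hC hvbox (π.symm i0)
    have e : v (π.symm i0) = u i0 := by simp [v]
    rwa [e] at h
  have ht_le_u0 : t ≤ u i0 := by
    have habs : |C u - C v| ≤ u i0 := abs_sub_le_iff.mpr ⟨by linarith, by linarith⟩
    rwa [hmax] at habs
  have ht_le : ∀ i, t ≤ u i := fun i =>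
    le_trans ht_le_u0 (hmono i0 i (by rw [Fin.le_def]; exact Nat.zero_le _))
  -- Fréchet bounds
  have hsumv : ∑ i, v i = ∑ i, u i := Equiv.sum_comp π u
  have hfu : (∑ i, u i) - ((d : ℝ) - 1) ≤ C u := cop_frechet hC hd0 hu
  have hfv : (∑ i, u i) - ((d : ℝ) - 1) ≤ C v := by
    have := cop_frechet hC hd0 hvbox
    rwa [hsumv] at this
  have hI2 : t ≤ u i0 + ((d:ℝ) - 1) - ∑ i, u i := by
    have habs : |C u - C v| ≤ u i0 + ((d:ℝ) - 1) - ∑ i, u i :=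
      abs_sub_le_iff.mpr ⟨by linarith, by linarith⟩
    rwa [hmax] at habs
  -- Lipschitz transport bound
  set T : ℝ := ∑ i, max (v i - u i) 0 with hTdef
  have h3a : C v ≤ C u + T := cop_onesided hC hu hvbox
  have h3b : C u ≤ C v + ∑ i, max (u i - v i) 0 := cop_onesided hC hvbox hu
  have hTT : ∑ i, max (u i - v i) 0 = T := by
    have h1 : ∑ i, (max (u i - v i) 0 - max (v i - u i) 0) = ∑ i, (u i - v i) := by
      apply Finset.sum_congr rfl
      intro i _
      rcases le_total (u i) (v i) with h | h
      · rw [max_eq_right (by linarith), max_eq_left (by linarith)]; ring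
      · rw [max_eq_left (by linarith), max_eq_right (by linarith)]; ring
    have h2 : ∑ i, (u i - v i) = 0 := by
      rw [Finset.sum_sub_distrib, hsumv]; ring
    rw [Finset.sum_sub_distrib] at h1
    rw [hTdef]
    linarith [h1, h2]
  have hI3 : t ≤ T := by
    have habs : |C u - C v| ≤ T := abs_sub_le_iff.mpr ⟨by linarith, by linarith⟩
    rwa [hmax] at habs
  have hT2 : T ≤ ∑ i, |u i - c| := by
    have step1 : T ≤ ∑ i, (max (v i - c) 0 + max (c - u i) 0) := by
      rw [hTdef]
      apply Finset.sum_le_sum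
      intro i _
      apply max_le
      · have h1 := le_max_left (v i - c) (0:ℝ)
        have h2 := le_max_left (c - u i) (0:ℝ)
        linarith
      · exact add_nonneg (le_max_right _ _) (le_max_right _ _)
    have step2 : ∑ i, (max (v i - c) 0 + max (c - u i) 0)
        = ∑ i, max (u i - c) 0 + ∑ i, max (c - u i) 0 := by
      rw [Finset.sum_add_distrib]
      congr 1
      exact Equiv.sum_comp π (fun j => max (u j - c) 0)
    have step3 : ∑ i, max (u i - c) 0 + ∑ i, max (c - u i) 0 = ∑ i, |u i - c| := by
      rw [← Finset.sum_add_distrib]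
      apply Finset.sum_congr rfl
      intro i _
      rcases le_total c (u i) with h | h
      · rw [max_eq_left (by linarith), max_eq_right (by linarith),
          abs_of_nonneg (by linarith)]; ring
      · rw [max_eq_right (by linarith), max_eq_left (by linarith),
          abs_of_nonpos (by linarith)]; ring
    linarith
  -- region decomposition
  set F : Finset (Fin d) := Finset.univ.filter (fun i : Fin d => m ≤ (i : ℕ)) with hF
  set L : Finset (Fin d) := Finset.univ.filter (fun i : Fin d => (i : ℕ) < k) with hL
  set G' : Finset (Fin d) := Finset.univ.filter (fun i : Fin d => 1 ≤ (i : ℕ) ∧ (i : ℕ) < m) with hG'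
  set Z : Finset (Fin d) := Finset.univ.filter (fun i : Fin d => (i : ℕ) = 0) with hZdef
  have hcardF : F.card = k := by
    have h := card_filter_val (d := d) (fun n => m ≤ n)
    have e : (Finset.range d).filter (fun n => m ≤ n) = Finset.Ico m d := by
      ext n; simp [Finset.mem_Ico]; omega
    rw [e, Nat.card_Ico] at h
    rw [hF]; exact h
  have hcardL : L.card = k := by
    have h := card_filter_val (d := d) (fun n => n < k)
    have e : (Finset.range d).filter (fun n => n < k) = Finset.range k := by
      ext n; simp; omega
    rw [e, Finset.card_range] at h
    rw [hL]; exact h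
  have hcardG' : G'.card = m - 1 := by
    have h := card_filter_val (d := d) (fun n => 1 ≤ n ∧ n < m)
    have e : (Finset.range d).filter (fun n => 1 ≤ n ∧ n < m) = Finset.Ico 1 m := by
      ext n; simp [Finset.mem_Ico]; omega
    rw [e, Nat.card_Ico] at h
    rw [hG']; exact h
  have hsplit1 : ∑ i, |u i - c| = ∑ i ∈ F, (u i - c) + ∑ i ∈ L, (c - u i) := by
    rw [hF, hL, Finset.sum_filter, Finset.sum_filter, ← Finset.sum_add_distrib]
    apply Finset.sum_congr rfl
    intro i _
    by_cases h1 : m ≤ (i : ℕ)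
    · have h2 : ¬((i : ℕ) < k) := by omega
      have hc_le : c ≤ u i := hmono ik i (by rw [Fin.le_def]; simp [ik]; omega)
      rw [if_pos h1, if_neg h2, abs_of_nonneg (by linarith)]; ring
    · by_cases h2 : (i : ℕ) < k
      · have hc_ge : u i ≤ c := hmono i ik (by rw [Fin.le_def]; simp [ik]; omega)
        rw [if_neg h1, if_pos h2, abs_of_nonpos (by linarith)]; ring
      · have hieq : i = ik := Fin.ext (by simp [ik]; omega)
        rw [if_neg h1, if_neg h2, hieq]
        simp [hcdef]
  have hsplit2 : ∑ i, u i = ∑ i ∈ Z, u i + ∑ i ∈ G', u i + ∑ i ∈ F, u i := by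
    rw [hZdef, hG', hF, Finset.sum_filter, Finset.sum_filter, Finset.sum_filter,
      ← Finset.sum_add_distrib, ← Finset.sum_add_distrib]
    apply Finset.sum_congr rfl
    intro i _
    by_cases h1 : (i : ℕ) = 0
    · have h2 : ¬(1 ≤ (i : ℕ) ∧ (i : ℕ) < m) := by omega
      have h3 : ¬(m ≤ (i : ℕ)) := by omega
      rw [if_pos h1, if_neg h2, if_neg h3]; ring
    · by_cases h2 : (i : ℕ) < m
      · have h3 : ¬(m ≤ (i : ℕ)) := by omega
        rw [if_neg h1, if_pos (by omega : 1 ≤ (i : ℕ) ∧ (i : ℕ) < m), if_neg h3]; ring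
      · have h3 : ¬(1 ≤ (i : ℕ) ∧ (i : ℕ) < m) := by omega
        rw [if_neg h1, if_neg h3, if_pos (by omega)]; ring
  have hZ : ∑ i ∈ Z, u i = u i0 := by
    have e : Z = {i0} := by
      ext i
      simp [hZdef, Finset.mem_filter, Fin.ext_iff, hi0]
    rw [e, Finset.sum_singleton]
  have hLb : (k : ℝ) * t ≤ ∑ i ∈ L, u i := by
    have h := Finset.card_nsmul_le_sum L u t (fun i _ => ht_le i)
    rwa [hcardL, nsmul_eq_mul] at h
  have hG'b : ((m : ℝ) - 1) * t ≤ ∑ i ∈ G', u i := by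
    have h := Finset.card_nsmul_le_sum G' u t (fun i _ => ht_le i)
    rw [hcardG', nsmul_eq_mul] at h
    have e : ((m - 1 : ℕ) : ℝ) = (m : ℝ) - 1 := by
      push_cast [Nat.cast_sub hm1]; ring
    rwa [e] at h
  have heq1 : ∑ i ∈ F, (u i - c) + ∑ i ∈ L, (c - u i)
      = ∑ i ∈ F, u i - ∑ i ∈ L, u i := by
    rw [Finset.sum_sub_distrib, Finset.sum_sub_distrib, Finset.sum_const, Finset.sum_const,
      hcardF, hcardL]
    ring
  have hβ : ((k : ℝ) + 1) * t ≤ ∑ i ∈ F, u i := by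
    have h := hI3
    rw [hsplit1, heq1] at hT2
    nlinarith [hLb, hT2, hI3]
  have hid : ((d:ℝ) + 1) * t = (d:ℝ) - 1 := by
    rw [htdef]; field_simp
  have hkc : (k : ℝ) = (d : ℝ) - (m : ℝ) := by
    rw [hkdef]; push_cast [Nat.cast_sub hmd]; ring
  have hα : ∑ i ∈ F, u i ≤ ((k : ℝ) + 1) * t := by
    have h1 : t ≤ ((d:ℝ) - 1) - ∑ i ∈ G', u i - ∑ i ∈ F, u i := by
      rw [hsplit2, hZ] at hI2
      linarith
    have hfin : ((d:ℝ) - 1) - t - ((m:ℝ) - 1) * t = ((k:ℝ) + 1) * t := by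
      rw [hkc, ← hid]; ring
    linarith [hG'b, h1, hfin]
  have heqF : ∑ i ∈ F, u i = ((k : ℝ) + 1) * t := le_antisymm hα hβ
  constructor
  · intro i
    refine ⟨by linarith [ht_le i], ?_⟩
    have h1 : u i ≤ 1 := (hu i).2
    have h2 : t + 2 / ((d:ℝ) + 1) = 1 := by
      rw [htdef]; field_simp; ring
    linarith
  · rw [Finset.sum_sub_distrib, Finset.sum_const, hcardF, nsmul_eq_mul, heqF]
    ring
end

section
/- Let d = 2n with n ≥ 2 be even and let u ∈ [0,1]^d satisfy u_1 = ⋯ = u_n = (d−1)/(d+1) and u_{n+j} = d/(d+1) + δ_j for j = 1,…,n, where 0 ≤ δ_1 ≤ ⋯ ≤ δ_n ≤ 1/(d+1) and Σ_{j=1}^n δ_j = (n−1)/(d+1). Then there exist a d-copula C and a permutation π ∈ S_d such that |C(u) − C(u_π)| = (d−1)/(d+1); in particular the order-reversing permutation π(j) = d − j + 1 can be taken. -/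
section Machinery
open MeasureTheory Set
noncomputable section


/-- Sub-level set family of an interval-exchange map. -/
def pieceSet (K : ℕ) (p c : ℕ → ℝ) (x : ℝ) : Set ℝ :=
  ⋃ k ∈ Finset.range K, Set.Ioc (p k) (min (p (k+1)) (x - c k))

lemma mem_pieceSet {K : ℕ} {p c : ℕ → ℝ} {x t : ℝ} :
    t ∈ pieceSet K p c x ↔ ∃ k < K, p k < t ∧ t ≤ p (k+1) ∧ t + c k ≤ x := by
  simp only [pieceSet, Set.mem_iUnion, Set.mem_Ioc, Finset.mem_range, le_min_iff,
    exists_prop]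
  constructor
  · rintro ⟨k, hk, h1, h2, h3⟩; exact ⟨k, hk, h1, h2, by linarith⟩
  · rintro ⟨k, hk, h1, h2, h3⟩; exact ⟨k, hk, h1, h2, by linarith⟩

lemma pieceSet_mono {K : ℕ} {p c : ℕ → ℝ} {x y : ℝ} (h : x ≤ y) :
    pieceSet K p c x ⊆ pieceSet K p c y := by
  intro t ht
  rw [mem_pieceSet] at ht ⊢
  obtain ⟨k, hk, h1, h2, h3⟩ := ht
  exact ⟨k, hk, h1, h2, by linarith⟩

lemma pieceSet_measurable {K : ℕ} {p c : ℕ → ℝ} {x : ℝ} :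
    MeasurableSet (pieceSet K p c x) :=
  MeasurableSet.biUnion (Finset.range K).countable_toSet
    (fun _ _ => measurableSet_Ioc)

/-- consecutive-steps monotonicity helper -/
lemma steps_mono {K : ℕ} {p : ℕ → ℝ} (h : ∀ k < K, p k ≤ p (k+1)) :
    ∀ i j, i ≤ j → j ≤ K → p i ≤ p j := by
  intro i j hij hjK
  induction j, hij using Nat.le_induction with
  | base => exact le_rfl
  | succ m hm ih => exact le_trans (ih (by omega)) (h m (by omega))

/-- coverage: a point below the top partial value lies in some step interval -/
lemma coverage {K : ℕ} {p : ℕ → ℝ} {t : ℝ} (h0 : p 0 < t) (hK : t ≤ p K) :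
    ∃ k < K, p k < t ∧ t ≤ p (k+1) := by
  by_contra hcon
  push_neg at hcon
  have key : ∀ j ≤ K, p j < t := by
    intro j
    induction j with
    | zero => intro _; exact h0
    | succ m ih => intro hm; exact hcon m (by omega) (ih (by omega))
  exact absurd hK (not_le.2 (key K le_rfl))

lemma pieceSet_subset {K : ℕ} {p c : ℕ → ℝ} {x : ℝ}
    (hp : ∀ k < K, p k ≤ p (k+1)) (h0 : p 0 = 0) (hK : p K = 1) :
    pieceSet K p c x ⊆ Set.Ioc 0 1 := by
  intro t ht
  rw [mem_pieceSet] at ht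
  obtain ⟨k, hk, h1, h2, _⟩ := ht
  have a1 : p 0 ≤ p k := steps_mono hp 0 k (by omega) (by omega)
  have a2 : p (k+1) ≤ p K := steps_mono hp (k+1) K (by omega) le_rfl
  constructor <;> [linarith; linarith]

lemma pieceSet_zero {K : ℕ} {p c : ℕ → ℝ} {x : ℝ} (hx : x ≤ 0)
    (h0 : ∀ k < K, 0 ≤ p k + c k) :
    pieceSet K p c x = ∅ := by
  ext t
  rw [mem_pieceSet]
  simp only [Set.mem_empty_iff_false, iff_false]
  rintro ⟨k, hk, h1, h2, h3⟩
  have := h0 k hk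
  linarith

lemma pieceSet_one {K : ℕ} {p c : ℕ → ℝ}
    (hp : ∀ k < K, p k ≤ p (k+1)) (h0 : p 0 = 0) (hK : p K = 1)
    (h1 : ∀ k < K, p (k+1) + c k ≤ 1) :
    pieceSet K p c 1 = Set.Ioc 0 1 := by
  apply Set.Subset.antisymm (pieceSet_subset hp h0 hK)
  intro t ht
  rw [mem_pieceSet]
  obtain ⟨k, hkK, hk1, hk2⟩ := coverage (p := p) (t := t) (K := K)
    (by rw [h0]; exact ht.1) (by rw [hK]; exact ht.2)
  exact ⟨k, hkK, hk1, hk2, by have := h1 k hkK; linarith⟩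

lemma pieceSet_volume {K : ℕ} {p c : ℕ → ℝ} {x : ℝ}
    (hp : ∀ k < K, p k ≤ p (k+1)) (hx : x ∈ Set.Icc (0:ℝ) 1)
    (hsum : ∑ k ∈ Finset.range K, (min (p (k+1) + c k) x - min (p k + c k) x) = x) :
    volume (pieceSet K p c x) = ENNReal.ofReal x := by
  rw [pieceSet, measure_biUnion_finset]
  · have : ∀ k ∈ Finset.range K,
        volume (Set.Ioc (p k) (min (p (k+1)) (x - c k)))
          = ENNReal.ofReal (min (p (k+1) + c k) x - min (p k + c k) x) := by
      intro k hk
      rw [Real.volume_Ioc]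
      rcases le_or_gt x (p k + c k) with h | h
      · have e1 : min (p (k+1) + c k) x - min (p k + c k) x = 0 := by
          rw [min_eq_right h, min_eq_right (le_trans h (by have := hp k (Finset.mem_range.1 hk); linarith))]
          ring
        rw [e1]
        have : min (p (k+1)) (x - c k) - p k ≤ 0 := by
          have : x - c k ≤ p k := by linarith
          have := min_le_right (p (k+1)) (x - c k)
          linarith
        simp [ENNReal.ofReal_eq_zero.2 this]
      · have e1 : min (p (k+1) + c k) x - min (p k + c k) x
            = min (p (k+1)) (x - c k) - p k := by
          rw [min_eq_left (le_of_lt h)]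
          rcases le_total (p (k+1) + c k) x with h2 | h2
          · rw [min_eq_left h2, min_eq_left (by linarith)]; ring
          · rw [min_eq_right h2, min_eq_right (by linarith)]; ring
        rw [e1]
    rw [Finset.sum_congr rfl this, ← ENNReal.ofReal_sum_of_nonneg, hsum]
    intro k hk
    have h1 := hp k (Finset.mem_range.1 hk)
    have : min (p k + c k) x ≤ min (p (k+1) + c k) x :=
      min_le_min (by linarith) le_rfl
    linarith
  · intro k hk l hl hkl
    simp only [Finset.coe_range, Set.mem_Iio] at hk hl
    have base : Disjoint (Set.Ioc (p k) (p (k+1))) (Set.Ioc (p l) (p (l+1))) := by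
      rcases hkl.lt_or_gt with h | h
      · exact Set.Ioc_disjoint_Ioc.2 ((min_le_left _ _).trans
          ((steps_mono hp (k+1) l (by omega) (by omega)).trans (le_max_right _ _)))
      · exact Set.Ioc_disjoint_Ioc.2 ((min_le_right _ _).trans
          ((steps_mono hp (l+1) k (by omega) (by omega)).trans (le_max_left _ _)))
    exact Set.disjoint_of_subset
      (Set.Ioc_subset_Ioc_right (min_le_left _ _))
      (Set.Ioc_subset_Ioc_right (min_le_left _ _)) base
  · exact fun _ _ => measurableSet_Ioc


def cop (d : ℕ) (F : Fin d → ℝ → Set ℝ) (v : Fin d → ℝ) : ℝ :=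
  ∫ t in Set.Ioc (0:ℝ) 1, ∏ i, Set.indicator (F i (v i)) (fun _ => (1:ℝ)) t

lemma prodIndicator1 {d : ℕ} (G : Fin d → Set ℝ) (t : ℝ) :
    ∏ i, Set.indicator (G i) (fun _ => (1:ℝ)) t
      = Set.indicator (⋂ i, G i) (fun _ => (1:ℝ)) t := by
  by_cases h : t ∈ ⋂ i, G i
  · rw [Set.indicator_of_mem h]
    rw [Set.mem_iInter] at h
    rw [Finset.prod_congr rfl (fun i _ => Set.indicator_of_mem (h i) _)]
    simp
  · rw [Set.indicator_of_notMem h]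
    rw [Set.mem_iInter] at h
    push_neg at h
    obtain ⟨i, hi⟩ := h
    exact Finset.prod_eq_zero (Finset.mem_univ i) (Set.indicator_of_notMem hi _)

lemma cop_eval {d : ℕ} (F : Fin d → ℝ → Set ℝ) (v : Fin d → ℝ)
    (hmeas : ∀ i x, MeasurableSet (F i x)) :
    cop d F v = (volume ((⋂ i, F i (v i)) ∩ Set.Ioc (0:ℝ) 1)).toReal := by
  unfold cop
  have hmi : MeasurableSet (⋂ i, F i (v i)) :=
    MeasurableSet.iInter (fun i => hmeas i (v i))
  calc ∫ t in Set.Ioc (0:ℝ) 1, ∏ i, Set.indicator (F i (v i)) (fun _ => (1:ℝ)) t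
      = ∫ t in Set.Ioc (0:ℝ) 1, Set.indicator (⋂ i, F i (v i)) (fun _ => (1:ℝ)) t := by
        exact integral_congr_ae (Filter.Eventually.of_forall (fun t => prodIndicator1 _ t))
    _ = ∫ t in (⋂ i, F i (v i)), (1:ℝ) ∂(volume.restrict (Set.Ioc (0:ℝ) 1)) := by
        exact integral_indicator hmi
    _ = ((volume.restrict (Set.Ioc (0:ℝ) 1)) (⋂ i, F i (v i))).toReal • (1:ℝ) :=
        setIntegral_const 1
    _ = (volume ((⋂ i, F i (v i)) ∩ Set.Ioc (0:ℝ) 1)).toReal := by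
        rw [Measure.restrict_apply hmi]; simp

lemma sum_corner {d : ℕ} (fa fb : Fin d → ℝ) :
    ∑ S : Finset (Fin d), (-1:ℝ)^(d - S.card) * ∏ i, (if i ∈ S then fb i else fa i)
      = ∏ i, (fb i - fa i) := by
  have : ∀ i : Fin d, fb i - fa i = fb i + (- fa i) := fun i => by ring
  rw [Finset.prod_congr rfl (fun i _ => this i), Finset.prod_add]
  rw [Finset.powerset_univ]
  apply Finset.sum_congr rfl
  intro S _
  have h1 : ∏ i ∈ Finset.univ \ S, (- fa i) = (-1:ℝ)^(d - S.card) * ∏ i ∈ Finset.univ \ S, fa i := by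
    have hcard : (Finset.univ \ S).card = d - S.card := by
      rw [Finset.card_sdiff_of_subset (Finset.subset_univ S), Finset.card_univ, Fintype.card_fin]
    rw [← hcard]
    rw [Finset.prod_congr rfl (fun i _ => (neg_one_mul (fa i)).symm),
      Finset.prod_mul_distrib, Finset.prod_const]
  rw [h1]
  have h2 : ∏ i, (if i ∈ S then fb i else fa i)
      = (∏ i ∈ S, fb i) * ∏ i ∈ Finset.univ \ S, fa i := by
    rw [Finset.prod_ite]
    congr 1
    · congr 1; ext i; simp
    · congr 1; ext i; simp
  rw [h2]; ring

theorem isCopula_of_families (d : ℕ) (F : Fin d → ℝ → Set ℝ)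
    (hmeas : ∀ i x, MeasurableSet (F i x))
    (hmono : ∀ i, ∀ x y : ℝ, x ≤ y → F i x ⊆ F i y)
    (hsub : ∀ i x, F i x ⊆ Set.Ioc 0 1)
    (hvol : ∀ i, ∀ x ∈ Set.Icc (0:ℝ) 1, volume (F i x) = ENNReal.ofReal x)
    (hone : ∀ i, Set.Ioc (0:ℝ) 1 ⊆ F i 1)
    (hzero : ∀ i, F i 0 = ∅) :
    IsCopula d (cop d F) := by
  refine ⟨?_, ?_, ?_⟩
  · -- grounded
    intro u hu ⟨i, hi⟩
    rw [cop_eval F u hmeas]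
    have : (⋂ j, F j (u j)) = ∅ := by
      apply Set.eq_empty_of_subset_empty
      intro t ht
      rw [Set.mem_iInter] at ht
      have := ht i
      rw [hi, hzero i] at this
      exact this
    rw [this]; simp
  · -- margins
    intro u hu i hi
    rw [cop_eval F u hmeas]
    have : (⋂ j, F j (u j)) ∩ Set.Ioc (0:ℝ) 1 = F i (u i) := by
      apply Set.Subset.antisymm
      · intro t ht
        exact (Set.mem_iInter.1 ht.1) i
      · intro t ht
        refine ⟨Set.mem_iInter.2 (fun j => ?_), hsub i (u i) ht⟩
        by_cases hj : j = i
        · subst hj; exact ht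
        · rw [hi j hj]; exact hone j (hsub i (u i) ht)
    rw [this, hvol i (u i) (hu i), ENNReal.toReal_ofReal (hu i).1]
  · -- d-increasing
    intro a b ha hb hab
    have integrable_ind : ∀ G : Fin d → Set ℝ, (∀ i, MeasurableSet (G i)) →
        Integrable (fun t => ∏ i, Set.indicator (G i) (fun _ => (1:ℝ)) t)
          (volume.restrict (Set.Ioc (0:ℝ) 1)) := by
      intro G hG
      have : (fun t => ∏ i, Set.indicator (G i) (fun _ => (1:ℝ)) t)
          = Set.indicator (⋂ i, G i) (fun _ => (1:ℝ)) := by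
        ext t; exact prodIndicator1 G t
      rw [this]
      exact (integrable_const (1:ℝ)).indicator (MeasurableSet.iInter hG)
    have key : ∀ S : Finset (Fin d), cop d F (fun k => if k ∈ S then b k else a k)
        = ∫ t in Set.Ioc (0:ℝ) 1,
            ∏ i, (if i ∈ S then Set.indicator (F i (b i)) (fun _ => (1:ℝ)) t
                  else Set.indicator (F i (a i)) (fun _ => (1:ℝ)) t) := by
      intro S
      unfold cop
      apply integral_congr_ae
      apply Filter.Eventually.of_forall
      intro t
      apply Finset.prod_congr rfl
      intro i _
      by_cases h : i ∈ S <;> simp [h]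
    calc (0:ℝ) ≤ ∫ t in Set.Ioc (0:ℝ) 1,
        ∏ i, (Set.indicator (F i (b i)) (fun _ => (1:ℝ)) t
              - Set.indicator (F i (a i)) (fun _ => (1:ℝ)) t) := by
          apply integral_nonneg
          intro t
          apply Finset.prod_nonneg
          intro i _
          have hsubab : F i (a i) ⊆ F i (b i) := hmono i _ _ (hab i)
          have := Set.indicator_le_indicator_of_subset hsubab
            (f := fun _ => (1:ℝ)) (fun _ => zero_le_one) t
          simp only [sub_nonneg]
          exact this
      _ = ∑ S : Finset (Fin d),
          (-1 : ℝ) ^ (d - S.card) * cop d F (fun k => if k ∈ S then b k else a k) := by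
          rw [Finset.sum_congr rfl (fun S _ => by rw [key S, ← integral_const_mul])]
          rw [← integral_finset_sum]
          · apply integral_congr_ae
            apply Filter.Eventually.of_forall
            intro t
            exact (sum_corner _ _).symm
          · intro S _
            apply Integrable.const_mul
            have : (fun t => ∏ i, (if i ∈ S then Set.indicator (F i (b i)) (fun _ => (1:ℝ)) t
                  else Set.indicator (F i (a i)) (fun _ => (1:ℝ)) t))
                = (fun t => ∏ i, Set.indicator (if i ∈ S then F i (b i) else F i (a i)) (fun _ => (1:ℝ)) t) := by
              ext t
              apply Finset.prod_congr rfl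
              intro i _
              by_cases h : i ∈ S <;> simp [h]
            rw [this]
            exact integrable_ind _ (fun i => by by_cases h : i ∈ S <;> simp [h, hmeas])



def eps (n : ℕ) : ℝ := 1 / (2*n+1)
def dl (n : ℕ) (δ : Fin n → ℝ) (k : ℕ) : ℝ := if h : k < n then δ ⟨k, h⟩ else 0
def Lf (n : ℕ) (δ : Fin n → ℝ) (j : ℕ) : ℝ := ∑ k ∈ Finset.range j, (eps n + dl n δ k)
def Mf (n : ℕ) (δ : Fin n → ℝ) (j : ℕ) : ℝ := ∑ k ∈ Finset.range j, (eps n - dl n δ k)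
def sf (n : ℕ) (δ : Fin n → ℝ) (i : ℕ) : ℝ := ∑ k ∈ Finset.range i, (eps n - dl n δ (n-1-k))
def al (n : ℕ) : ℝ := 1 - 2 * eps n
def be (n : ℕ) : ℝ := 1 - eps n

section facts
variable (n : ℕ) (δ : Fin n → ℝ)

lemma epspos : 0 < eps n := by
  unfold eps; positivity

lemma epsid : (2*(n:ℝ)+1) * eps n = 1 := by
  unfold eps; field_simp

lemma eps5 (hn : 2 ≤ n) : eps n ≤ 1/5 := by
  unfold eps
  rw [div_le_div_iff₀ (by positivity) (by norm_num)]
  have : (2:ℝ) ≤ (n:ℝ) := by exact_mod_cast hn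
  linarith

variable {hδ0' : True}

lemma dl0 (hδ0 : ∀ j, 0 ≤ δ j) : ∀ k, 0 ≤ dl n δ k := by
  intro k; unfold dl; split
  · exact hδ0 _
  · exact le_rfl

lemma dl1 (hδ1 : ∀ j, δ j ≤ eps n) : ∀ k, dl n δ k ≤ eps n := by
  intro k; unfold dl; split
  · exact hδ1 _
  · exact le_of_lt (epspos n)

lemma dlsum (hδsum : ∑ j, δ j = ((n:ℝ) - 1) * eps n) : ∑ k ∈ Finset.range n, dl n δ k = ((n:ℝ) - 1) * eps n := by
  rw [← hδsum, ← Fin.sum_univ_eq_sum_range]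
  apply Finset.sum_congr rfl
  intro i _
  unfold dl
  rw [dif_pos i.isLt]

lemma Mf_eq (j : ℕ) : Mf n δ j = j * eps n - ∑ k ∈ Finset.range j, dl n δ k := by
  unfold Mf
  rw [Finset.sum_sub_distrib, Finset.sum_const, Finset.card_range]
  simp [nsmul_eq_mul]

lemma Lstep (j : ℕ) : Lf n δ (j+1) = Lf n δ j + (eps n + dl n δ j) :=
  Finset.sum_range_succ _ _

lemma Mstep (j : ℕ) : Mf n δ (j+1) = Mf n δ j + (eps n - dl n δ j) :=
  Finset.sum_range_succ _ _

lemma sstep (i : ℕ) : sf n δ (i+1) = sf n δ i + (eps n - dl n δ (n-1-i)) :=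
  Finset.sum_range_succ _ _

lemma Lmono (hδ0 : ∀ j, 0 ≤ δ j) : ∀ i j, i ≤ j → Lf n δ i ≤ Lf n δ j := by
  intro i j hij
  apply Finset.sum_le_sum_of_subset_of_nonneg (Finset.range_subset_range.2 hij)
  intro k _ _
  have := dl0 n δ hδ0 k
  have := epspos n
  linarith

lemma Mmono (hδ1 : ∀ j, δ j ≤ eps n) : ∀ i j, i ≤ j → Mf n δ i ≤ Mf n δ j := by
  intro i j hij
  apply Finset.sum_le_sum_of_subset_of_nonneg (Finset.range_subset_range.2 hij)
  intro k _ _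
  have := dl1 n δ hδ1 k
  linarith

lemma smono (hδ1 : ∀ j, δ j ≤ eps n) : ∀ i j, i ≤ j → sf n δ i ≤ sf n δ j := by
  intro i j hij
  apply Finset.sum_le_sum_of_subset_of_nonneg (Finset.range_subset_range.2 hij)
  intro k _ _
  have := dl1 n δ hδ1 (n-1-k)
  linarith

lemma Lpos (hδ0 : ∀ j, 0 ≤ δ j) (j : ℕ) : 0 ≤ Lf n δ j := by
  have := Lmono n δ hδ0 0 j (by omega); simpa [Lf] using this

lemma Mpos (hδ1 : ∀ j, δ j ≤ eps n) (j : ℕ) : 0 ≤ Mf n δ j := by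
  have := Mmono n δ hδ1 0 j (by omega); simpa [Mf] using this

lemma spos (hδ1 : ∀ j, δ j ≤ eps n) (i : ℕ) : 0 ≤ sf n δ i := by
  have := smono n δ hδ1 0 i (by omega); simpa [sf] using this

lemma Ln (hδsum : ∑ j, δ j = ((n:ℝ) - 1) * eps n) : Lf n δ n = al n := by
  unfold Lf al
  rw [Finset.sum_add_distrib, Finset.sum_const, Finset.card_range,
    dlsum n δ hδsum, nsmul_eq_mul]
  linear_combination epsid n

lemma Mn (hδsum : ∑ j, δ j = ((n:ℝ) - 1) * eps n) : Mf n δ n = eps n := by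
  rw [Mf_eq, dlsum n δ hδsum]
  ring

lemma sfn (hδsum : ∑ j, δ j = ((n:ℝ) - 1) * eps n) : sf n δ n = eps n := by
  unfold sf
  rw [Finset.sum_range_reflect (fun k => eps n - dl n δ k) n]
  have : ∑ k ∈ Finset.range n, (eps n - dl n δ k) = Mf n δ n := rfl
  rw [this, Mn n δ hδsum]

lemma keyM (hδ1 : ∀ j, δ j ≤ eps n) (hδsum : ∑ j, δ j = ((n:ℝ) - 1) * eps n) (j : ℕ) (hj : j < n) : Mf n δ (j+1) ≤ eps n := by
  rw [Mf_eq]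
  have hsplit : ∑ k ∈ Finset.range (j+1), dl n δ k + ∑ k ∈ Finset.Ico (j+1) n, dl n δ k
      = ∑ k ∈ Finset.range n, dl n δ k := Finset.sum_range_add_sum_Ico _ (by omega)
  have hico : ∑ k ∈ Finset.Ico (j+1) n, dl n δ k ≤ ((n:ℝ) - (j+1)) * eps n := by
    have := Finset.sum_le_card_nsmul (Finset.Ico (j+1) n) (dl n δ) (eps n)
      (fun k _ => dl1 n δ hδ1 k)
    rw [Nat.card_Ico, nsmul_eq_mul] at this
    have hcast : ((n - (j+1) : ℕ) : ℝ) = (n:ℝ) - (j+1) := by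
      push_cast [Nat.cast_sub (by omega : j+1 ≤ n)]; ring
    rw [hcast] at this
    exact this
  rw [dlsum n δ hδsum] at hsplit
  push_cast
  nlinarith [epspos n]

lemma Msmall (hδ1 : ∀ j, δ j ≤ eps n) (hδsum : ∑ j, δ j = ((n:ℝ) - 1) * eps n) (j : ℕ) (hj : j ≤ n) : Mf n δ j ≤ eps n := by
  cases j with
  | zero => simp [Mf]; exact le_of_lt (epspos n)
  | succ m => exact keyM n δ hδ1 hδsum m (by omega)

lemma ssmall (hδ1 : ∀ j, δ j ≤ eps n) (hδsum : ∑ j, δ j = ((n:ℝ) - 1) * eps n) (i : ℕ) (hi : i ≤ n) : sf n δ i ≤ eps n := by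
  have := smono n δ hδ1 i n hi
  rw [sfn n δ hδsum] at this
  exact this

end facts
def ph (n : ℕ) (δ : Fin n → ℝ) (i : ℕ) : ℕ → ℝ := fun k =>
  if k = 0 then 0 else if k = 1 then al n + sf n δ i else if k = 2 then al n + sf n δ (i+1) else 1
def ch (n : ℕ) (δ : Fin n → ℝ) (i : ℕ) : ℕ → ℝ := fun k =>
  if k = 0 then 0 else if k = 1 then 1 - al n - sf n δ (i+1) else sf n δ i - sf n δ (i+1)
def pg (n : ℕ) (δ : Fin n → ℝ) (j : ℕ) : ℕ → ℝ := fun k =>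
  if k = 0 then 0 else if k = 1 then Lf n δ j else if k = 2 then Lf n δ (j+1)
  else if k = 3 then al n else if k = 4 then be n + Mf n δ j
  else if k = 5 then be n + Mf n δ (j+1) else 1
def cg (n : ℕ) (δ : Fin n → ℝ) (j : ℕ) : ℕ → ℝ := fun k =>
  if k = 0 then 0 else if k = 1 then al n - Lf n δ j else if k = 2 then Lf n δ j - Lf n δ (j+1)
  else if k = 3 then -(eps n + Mf n δ j) else if k = 4 then dl n δ j - Mf n δ j
  else -(2*eps n + dl n δ j + Mf n δ (j+1))

def Fh (n : ℕ) (δ : Fin n → ℝ) (i : ℕ) : ℝ → Set ℝ := pieceSet 3 (ph n δ i) (ch n δ i)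
def Fg (n : ℕ) (δ : Fin n → ℝ) (j : ℕ) : ℝ → Set ℝ := pieceSet 6 (pg n δ j) (cg n δ j)
def Ffam (n : ℕ) (δ : Fin n → ℝ) (d : ℕ) : Fin d → ℝ → Set ℝ := fun i =>
  if (i : ℕ) < n then Fh n δ (i : ℕ) else Fg n δ ((i : ℕ) - n)

section obligations
variable {n : ℕ} {δ : Fin n → ℝ}

lemma alnonneg (hn : 2 ≤ n) : 0 ≤ al n := by
  have := eps5 n hn; unfold al; linarith

lemma hsum_h (n : ℕ) (δ : Fin n → ℝ) (i : ℕ) (x : ℝ) (hx : x ∈ Set.Icc (0:ℝ) 1) :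
    ∑ k ∈ Finset.range 3, (min (ph n δ i (k+1) + ch n δ i k) x - min (ph n δ i k + ch n δ i k) x) = x := by
  rw [Finset.sum_range_succ, Finset.sum_range_succ, Finset.sum_range_succ, Finset.sum_range_zero]
  norm_num [ph, ch]
  have m0 : (0:ℝ) ⊓ x = 0 := min_eq_left hx.1
  have m1 : (1:ℝ) ⊓ x = x := min_eq_right hx.2
  have e : al n + sf n δ i + (1 - al n - sf n δ (i+1)) = 1 + (sf n δ i - sf n δ (i+1)) := by ring
  rw [e, m0, m1]; ring

lemma hsum_g (n : ℕ) (δ : Fin n → ℝ) (j : ℕ) (x : ℝ) (hx : x ∈ Set.Icc (0:ℝ) 1) :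
    ∑ k ∈ Finset.range 6, (min (pg n δ j (k+1) + cg n δ j k) x - min (pg n δ j k + cg n δ j k) x) = x := by
  rw [Finset.sum_range_succ, Finset.sum_range_succ, Finset.sum_range_succ,
    Finset.sum_range_succ, Finset.sum_range_succ, Finset.sum_range_succ, Finset.sum_range_zero]
  norm_num [pg, cg]
  have m0 : (0:ℝ) ⊓ x = 0 := min_eq_left hx.1
  have m1 : (1:ℝ) ⊓ x = x := min_eq_right hx.2
  have hL : Lf n δ (j+1) = Lf n δ j + (eps n + dl n δ j) := Finset.sum_range_succ _ _
  have hM : Mf n δ (j+1) = Mf n δ j + (eps n - dl n δ j) := Finset.sum_range_succ _ _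
  have e1 : Lf n δ (j+1) + (al n - Lf n δ j) = be n + dl n δ j := by
    rw [hL]; unfold al be; ring
  have e2 : al n + (Lf n δ j - Lf n δ (j+1)) = al n - eps n - dl n δ j := by rw [hL]; ring
  have e3 : be n + -eps n = al n := by unfold al be; ring
  have e4 : al n + (-Mf n δ j + -eps n) = al n - eps n - Mf n δ j := by ring
  have e5 : be n + Mf n δ (j+1) + (dl n δ j - Mf n δ j) = 1 := by rw [hM]; unfold be; ring
  have e6 : 1 + (-Mf n δ (j+1) + (-dl n δ j + -(2*eps n))) = al n - eps n - Mf n δ j := by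
    rw [hM]; unfold al; ring
  have e7 : be n + (-dl n δ j + -(2*eps n)) = al n - eps n - dl n δ j := by
    unfold al be; ring
  rw [e1, e2, e3, e4, e5, e6, e7, m0, m1]; ring

lemma Fh_props (hn : 2 ≤ n) (hδ1 : ∀ j, δ j ≤ eps n)
    (hδsum : ∑ j, δ j = ((n:ℝ) - 1) * eps n) (i : ℕ) (hi : i < n) :
    (∀ k < 3, ph n δ i k ≤ ph n δ i (k+1)) ∧ (∀ k < 3, 0 ≤ ph n δ i k + ch n δ i k) ∧
    (∀ k < 3, ph n δ i (k+1) + ch n δ i k ≤ 1) := by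
  have h1 := alnonneg hn
  have h2 := spos n δ hδ1 i
  have h3 := spos n δ hδ1 (i+1)
  have h4 := smono n δ hδ1 i (i+1) (by omega)
  have h5 := ssmall n δ hδ1 hδsum (i+1) (by omega)
  have h6 := eps5 n hn
  have h7 := epspos n
  have h8 : al n = 1 - 2 * eps n := rfl
  refine ⟨?_, ?_, ?_⟩ <;> (intro k hk; interval_cases k <;> norm_num [ph, ch] <;> linarith)

lemma Fg_props (hn : 2 ≤ n) (hδ0 : ∀ j, 0 ≤ δ j) (hδ1 : ∀ j, δ j ≤ eps n)
    (hδsum : ∑ j, δ j = ((n:ℝ) - 1) * eps n) (j : ℕ) (hj : j < n) :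
    (∀ k < 6, pg n δ j k ≤ pg n δ j (k+1)) ∧ (∀ k < 6, 0 ≤ pg n δ j k + cg n δ j k) ∧
    (∀ k < 6, pg n δ j (k+1) + cg n δ j k ≤ 1) := by
  have h1 := alnonneg hn
  have h2 := Lpos n δ hδ0 j
  have h3 : Lf n δ (j+1) = Lf n δ j + (eps n + dl n δ j) := Finset.sum_range_succ _ _
  have h4 : Lf n δ (j+1) ≤ al n := by
    have := Lmono n δ hδ0 (j+1) n (by omega); rw [Ln n δ hδsum] at this; exact this
  have h5 := Mpos n δ hδ1 j
  have h6 : Mf n δ (j+1) = Mf n δ j + (eps n - dl n δ j) := Finset.sum_range_succ _ _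
  have h7 := Msmall n δ hδ1 hδsum j (by omega)
  have h8 := keyM n δ hδ1 hδsum j hj
  have h9 := eps5 n hn
  have h10 := epspos n
  have h11 := dl0 n δ hδ0 j
  have h12 := dl1 n δ hδ1 j
  have h13 : al n = 1 - 2 * eps n := rfl
  have h14 : be n = 1 - eps n := rfl
  refine ⟨?_, ?_, ?_⟩ <;> (intro k hk; interval_cases k <;> norm_num [pg, cg] <;> linarith)

end obligations

end


end Machinery

section Main
open MeasureTheory Set
/-- For even `d = 2n` (`n ≥ 2`) and any point `u` with `u_1 = ⋯ = u_n = (d−1)/(d+1)` and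
`u_{n+j} = d/(d+1) + δ_j`, where `0 ≤ δ_1 ≤ ⋯ ≤ δ_n ≤ 1/(d+1)` and
`Σ δ_j = (n−1)/(d+1)`, there is a `d`-copula attaining the maximal non-exchangeability
`(d−1)/(d+1)` at `u`; the order-reversing permutation `π(j) = d − j + 1`
(0-indexed: `i ↦ d − 1 − i`, i.e. `Fin.rev`) can be taken. -/
theorem max_attained_even (d n : ℕ) (hn : 2 ≤ n) (hd : d = 2 * n)
    (u : Fin d → ℝ) (δ : Fin n → ℝ)
    (hδ0 : ∀ j, 0 ≤ δ j) (hδmono : ∀ i j : Fin n, i ≤ j → δ i ≤ δ j)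
    (hδ1 : ∀ j, δ j ≤ 1 / ((d : ℝ) + 1))
    (hδsum : ∑ j, δ j = ((n : ℝ) - 1) / ((d : ℝ) + 1))
    (hu1 : ∀ i : Fin d, (i : ℕ) < n → u i = ((d : ℝ) - 1) / ((d : ℝ) + 1))
    (hu2 : ∀ j : Fin n, u ⟨n + (j : ℕ), by omega⟩ = (d : ℝ) / ((d : ℝ) + 1) + δ j) :
    ∃ C : (Fin d → ℝ) → ℝ, IsCopula d C ∧
      |C u - C (u ∘ Fin.rev)| = ((d : ℝ) - 1) / ((d : ℝ) + 1) := by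
  
  subst hd
  have h2n : (0:ℝ) < 2*(n:ℝ)+1 := by positivity
  have hdr : ((2*n : ℕ):ℝ) = 2*(n:ℝ) := by push_cast; ring
  have halval : (2*(n:ℝ) - 1)/(2*(n:ℝ) + 1) = al n := by
    unfold al eps; field_simp; ring
  have hbeval : (2*(n:ℝ))/(2*(n:ℝ) + 1) = be n := by
    unfold be eps; field_simp; ring
  have hδ1' : ∀ j, δ j ≤ eps n := by
    intro j
    have := hδ1 j
    rw [hdr] at this
    unfold eps
    exact this
  have hδsum' : ∑ j, δ j = ((n:ℝ) - 1) * eps n := by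
    rw [hδsum, hdr]
    unfold eps
    ring
  have hepspos := epspos n
  have heps5 := eps5 n hn
  have halnn := alnonneg (n := n) hn
  have hal : al n = 1 - 2*eps n := rfl
  have hbe : be n = 1 - eps n := rfl
  have hlt : ∀ i : Fin (2*n), ¬((i:ℕ) < n) → (i:ℕ) - n < n := by
    intro i h; have := i.isLt; omega
  -- copula axioms data
  have hmeas : ∀ (i : Fin (2*n)) (x : ℝ), MeasurableSet (Ffam n δ (2*n) i x) := by
    intro i x
    unfold Ffam
    split <;> exact pieceSet_measurable
  have hmono : ∀ (i : Fin (2*n)) (x y : ℝ), x ≤ y →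
      Ffam n δ (2*n) i x ⊆ Ffam n δ (2*n) i y := by
    intro i x y h
    unfold Ffam
    split <;> exact pieceSet_mono h
  have hsubset : ∀ (i : Fin (2*n)) (x : ℝ), Ffam n δ (2*n) i x ⊆ Set.Ioc 0 1 := by
    intro i x
    unfold Ffam
    split
    · next h =>
      unfold Fh
      exact pieceSet_subset (Fh_props hn hδ1' hδsum' _ h).1 rfl (by norm_num [ph])
    · next h =>
      unfold Fg
      exact pieceSet_subset (Fg_props hn hδ0 hδ1' hδsum' _ (hlt i h)).1 rfl (by norm_num [pg])
  have hvol : ∀ (i : Fin (2*n)), ∀ x ∈ Set.Icc (0:ℝ) 1,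
      volume (Ffam n δ (2*n) i x) = ENNReal.ofReal x := by
    intro i x hx
    unfold Ffam
    split
    · next h =>
      unfold Fh
      exact pieceSet_volume (Fh_props hn hδ1' hδsum' _ h).1 hx (hsum_h n δ _ x hx)
    · next h =>
      unfold Fg
      exact pieceSet_volume (Fg_props hn hδ0 hδ1' hδsum' _ (hlt i h)).1 hx (hsum_g n δ _ x hx)
  have hone : ∀ i : Fin (2*n), Set.Ioc (0:ℝ) 1 ⊆ Ffam n δ (2*n) i 1 := by
    intro i
    unfold Ffam
    split
    · next h =>
      unfold Fh
      rw [pieceSet_one (Fh_props hn hδ1' hδsum' _ h).1 rfl (by norm_num [ph])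
        (Fh_props hn hδ1' hδsum' _ h).2.2]
    · next h =>
      unfold Fg
      rw [pieceSet_one (Fg_props hn hδ0 hδ1' hδsum' _ (hlt i h)).1 rfl (by norm_num [pg])
        (Fg_props hn hδ0 hδ1' hδsum' _ (hlt i h)).2.2]
  have hzero : ∀ i : Fin (2*n), Ffam n δ (2*n) i 0 = ∅ := by
    intro i
    unfold Ffam
    split
    · next h =>
      unfold Fh
      exact pieceSet_zero le_rfl (Fh_props hn hδ1' hδsum' _ h).2.1
    · next h =>
      unfold Fg
      exact pieceSet_zero le_rfl (Fg_props hn hδ0 hδ1' hδsum' _ (hlt i h)).2.1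
  -- values of u
  have hval1 : ∀ i : Fin (2*n), (i:ℕ) < n → u i = al n := by
    intro i h
    rw [hu1 i h, hdr, halval]
  have hval2 : ∀ i : Fin (2*n), n ≤ (i:ℕ) → u i = be n + dl n δ ((i:ℕ) - n) := by
    intro i h
    have hj : (i:ℕ) - n < n := by have := i.isLt; omega
    have h2 := hu2 ⟨(i:ℕ) - n, hj⟩
    have hi : (⟨n + ((i:ℕ) - n), by omega⟩ : Fin (2*n)) = i := by
      apply Fin.ext; simp; omega
    rw [hi] at h2
    rw [h2, hdr, hbeval]
    congr 1
    unfold dl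
    rw [dif_pos hj]
  have hrevval : ∀ i : Fin (2*n), (i:ℕ) < n →
      (u ∘ Fin.rev) i = be n + dl n δ (n - 1 - (i:ℕ)) := by
    intro i h
    have hrv : ((Fin.rev i : Fin (2*n)) : ℕ) = 2*n - 1 - (i:ℕ) := by
      rw [Fin.val_rev]; omega
    have hge : n ≤ ((Fin.rev i : Fin (2*n)) : ℕ) := by rw [hrv]; have := i.isLt; have := h; omega
    show u (Fin.rev i) = _
    rw [hval2 _ hge]
    have harg : ((Fin.rev i : Fin (2*n)) : ℕ) - n = n - 1 - (i:ℕ) := by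
      rw [hrv]; omega
    rw [harg]
  have hrevval2 : ∀ i : Fin (2*n), n ≤ (i:ℕ) → (u ∘ Fin.rev) i = al n := by
    intro i h
    have hrv : ((Fin.rev i : Fin (2*n)) : ℕ) = 2*n - 1 - (i:ℕ) := by
      rw [Fin.val_rev]; omega
    show u (Fin.rev i) = _
    exact hval1 _ (by rw [hrv]; have := i.isLt; omega)
  refine ⟨cop (2*n) (Ffam n δ (2*n)), isCopula_of_families _ _ hmeas hmono hsubset hvol hone hzero, ?_⟩
  -- first evaluation
  have hC1 : cop (2*n) (Ffam n δ (2*n)) u = al n := by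
    rw [cop_eval _ _ hmeas]
    have hset : (⋂ i, Ffam n δ (2*n) i (u i)) ∩ Set.Ioc 0 1 = Set.Ioc 0 (al n) := by
      ext t
      constructor
      · rintro ⟨h1, h2⟩
        refine ⟨h2.1, ?_⟩
        have h0 := Set.mem_iInter.1 h1 ⟨0, by omega⟩
        rw [hval1 ⟨0, by omega⟩ (by simp; omega)] at h0
        have hko : ((⟨0, by omega⟩ : Fin (2*n)) : ℕ) < n := by simp; omega
        unfold Ffam at h0
        rw [if_pos hko] at h0
        unfold Fh at h0
        rw [mem_pieceSet] at h0
        obtain ⟨k, hk, hk1, hk2, hk3⟩ := h0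
        have hsf0 : sf n δ ((⟨0, by omega⟩ : Fin (2*n)) : ℕ) = 0 := by simp [sf]
        have hsf1 := ssmall n δ hδ1' hδsum' (((⟨0, by omega⟩ : Fin (2*n)) : ℕ) + 1)
          (by simp; omega)
        have hsp := spos n δ hδ1' (((⟨0, by omega⟩ : Fin (2*n)) : ℕ) + 1)
        interval_cases k <;> norm_num [ph, ch] at hk1 hk2 hk3 <;> linarith
      · intro ht
        have htIoc : t ∈ Set.Ioc (0:ℝ) 1 := ⟨ht.1, by have := ht.2; linarith⟩
        refine ⟨Set.mem_iInter.2 ?_, htIoc⟩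
        intro i
        by_cases hi : (i:ℕ) < n
        · rw [hval1 i hi]
          unfold Ffam
          rw [if_pos hi]
          unfold Fh
          rw [mem_pieceSet]
          refine ⟨0, by norm_num, ?_, ?_, ?_⟩ <;> norm_num [ph, ch]
          · exact ht.1
          · have := spos n δ hδ1' (i:ℕ); linarith [ht.2]
          · exact ht.2
        · have hj : (i:ℕ) - n < n := hlt i hi
          rw [hval2 i (by omega)]
          unfold Ffam
          rw [if_neg hi]
          unfold Fg
          rw [mem_pieceSet]
          have hLs : Lf n δ ((i:ℕ) - n + 1) = Lf n δ ((i:ℕ) - n) + (eps n + dl n δ ((i:ℕ) - n)) :=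
            Finset.sum_range_succ _ _
          have hL1 : Lf n δ ((i:ℕ) - n + 1) ≤ al n := by
            have := Lmono n δ hδ0 ((i:ℕ) - n + 1) n (by omega)
            rw [Ln n δ hδsum'] at this; exact this
          have hL0 := Lpos n δ hδ0 ((i:ℕ) - n)
          have hd0 := dl0 n δ hδ0 ((i:ℕ) - n)
          rcases le_or_gt t (Lf n δ ((i:ℕ) - n)) with hc | hc
          · refine ⟨0, by norm_num, ?_, ?_, ?_⟩ <;> norm_num [pg, cg]
            · exact ht.1
            · exact hc
            · linarith [ht.2]
          · rcases le_or_gt t (Lf n δ ((i:ℕ) - n + 1)) with hc2 | hc2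
            · refine ⟨1, by norm_num, ?_, ?_, ?_⟩ <;> norm_num [pg, cg]
              · exact hc
              · exact hc2
              · linarith
            · refine ⟨2, by norm_num, ?_, ?_, ?_⟩ <;> norm_num [pg, cg]
              · exact hc2
              · exact ht.2
              · linarith [ht.2]
    rw [hset, Real.volume_Ioc, sub_zero, ENNReal.toReal_ofReal halnn]
  -- second evaluation
  have hC2 : cop (2*n) (Ffam n δ (2*n)) (u ∘ Fin.rev) = 0 := by
    rw [cop_eval _ _ hmeas]
    have hset : (⋂ i, Ffam n δ (2*n) i ((u ∘ Fin.rev) i)) ∩ Set.Ioc 0 1 = (∅ : Set ℝ) := by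
      ext t
      simp only [Set.mem_empty_iff_false, iff_false]
      rintro ⟨h1, h2⟩
      rcases le_or_gt t (al n) with hta | hta
      · -- region (0, al]
        obtain ⟨j, hjn, hj1, hj2⟩ := coverage (K := n) (p := Lf n δ) (t := t)
          (by simp [Lf]; exact h2.1) (by rw [Ln n δ hδsum']; exact hta)
        have hmem := Set.mem_iInter.1 h1 ⟨n + j, by omega⟩
        have hko : ¬(((⟨n + j, by omega⟩ : Fin (2*n)) : ℕ) < n) := by simp
        rw [hrevval2 _ (by simp)] at hmem
        unfold Ffam at hmem
        rw [if_neg hko] at hmem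
        unfold Fg at hmem
        rw [mem_pieceSet] at hmem
        obtain ⟨k, hk, hk1, hk2, hk3⟩ := hmem
        have hje : ((⟨n + j, by omega⟩ : Fin (2*n)) : ℕ) - n = j := by simp
        rw [hje] at hk1 hk2 hk3
        have hM0 := Mpos n δ hδ1' j
        have hM1 := Mpos n δ hδ1' (j+1)
        interval_cases k <;> norm_num [pg, cg] at hk1 hk2 hk3 <;> linarith
      · rcases le_or_gt t (be n) with htb | htb
        · -- region (al, be]
          obtain ⟨i, hin, hi1, hi2⟩ := coverage (K := n) (p := fun i => al n + sf n δ i) (t := t)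
            (by simp [sf]; exact hta)
            (by show t ≤ al n + sf n δ n; rw [sfn n δ hδsum']; rw [hbe] at htb; rw [hal]; linarith)
          have hmem := Set.mem_iInter.1 h1 ⟨i, by omega⟩
          have hko : (((⟨i, by omega⟩ : Fin (2*n)) : ℕ) < n) := by simpa
          rw [hrevval _ hko] at hmem
          unfold Ffam at hmem
          rw [if_pos hko] at hmem
          unfold Fh at hmem
          rw [mem_pieceSet] at hmem
          obtain ⟨k, hk, hk1, hk2, hk3⟩ := hmem
          have hie : ((⟨i, by omega⟩ : Fin (2*n)) : ℕ) = i := by simp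
          rw [hie] at hk1 hk2 hk3
          have hss : sf n δ (i+1) = sf n δ i + (eps n - dl n δ (n-1-i)) :=
            Finset.sum_range_succ _ _
          interval_cases k <;> norm_num [ph, ch] at hk1 hk2 hk3 <;> linarith
        · -- region (be, 1]
          obtain ⟨j, hjn, hj1, hj2⟩ := coverage (K := n) (p := fun j => be n + Mf n δ j) (t := t)
            (by simp [Mf]; exact htb)
            (by show t ≤ be n + Mf n δ n; rw [Mn n δ hδsum']; rw [hbe]; linarith [h2.2])
          have hmem := Set.mem_iInter.1 h1 ⟨n + j, by omega⟩
          have hko : ¬(((⟨n + j, by omega⟩ : Fin (2*n)) : ℕ) < n) := by simp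
          rw [hrevval2 _ (by simp)] at hmem
          unfold Ffam at hmem
          rw [if_neg hko] at hmem
          unfold Fg at hmem
          rw [mem_pieceSet] at hmem
          obtain ⟨k, hk, hk1, hk2, hk3⟩ := hmem
          have hje : ((⟨n + j, by omega⟩ : Fin (2*n)) : ℕ) - n = j := by simp
          rw [hje] at hk1 hk2 hk3
          have hM0 := Mpos n δ hδ1' j
          have hLal : Lf n δ j ≤ al n := by
            have := Lmono n δ hδ0 j n (by omega)
            rw [Ln n δ hδsum'] at this; exact this
          have hLal2 : Lf n δ (j+1) ≤ al n := by
            have := Lmono n δ hδ0 (j+1) n (by omega)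
            rw [Ln n δ hδsum'] at this; exact this
          have hd0 := dl0 n δ hδ0 j
          interval_cases k <;> norm_num [pg, cg] at hk1 hk2 hk3 <;> linarith
    rw [hset]
    simp
  rw [hC1, hC2, sub_zero, abs_of_nonneg halnn, hdr]
  exact halval.symm

end Main
end

section
/- Let d ≥ 3 and let u ∈ [0,1]^d with u_1 ≤ ⋯ ≤ u_d. Let π ∈ S_d be a permutation having exactly three non-fixed points i_1 < i_2 < i_3 in {1,…,d}. Then for any d-copula C, |C(u) − C(u_π)| ≤ u_{i_3} − u_{i_1} ≤ u_d − u_1. -/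
lemma copula_vol {d : ℕ} {C : (Fin d → ℝ) → ℝ} (hC : IsCopula d C)
    (a b : Fin d → ℝ) (ha : ∀ i, a i ∈ Set.Icc (0:ℝ) 1) (hb : ∀ i, b i ∈ Set.Icc (0:ℝ) 1)
    (hab : ∀ i, a i ≤ b i) (E : Finset (Fin d)) (hE : ∀ k, k ∉ E → a k = 0) :
    0 ≤ ∑ T ∈ E.powerset,
        (-1:ℝ) ^ (E.card - T.card) * C (fun k => if k ∈ T ∪ Eᶜ then b k else a k) := by
  have h := hC.2.2 a b ha hb hab
  have key : (∑ S : Finset (Fin d),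
        (-1:ℝ)^(d - S.card) * C (fun k => if k ∈ S then b k else a k))
      = ∑ T ∈ E.powerset,
        (-1:ℝ)^(E.card - T.card) * C (fun k => if k ∈ T ∪ Eᶜ then b k else a k) := by
    rw [← Finset.sum_filter_add_sum_filter_not Finset.univ (fun S => Eᶜ ⊆ S)]
    have h2 : (∑ S ∈ Finset.univ.filter (fun S => ¬ Eᶜ ⊆ S),
        (-1:ℝ)^(d - S.card) * C (fun k => if k ∈ S then b k else a k)) = 0 := by
      apply Finset.sum_eq_zero
      intro S hS
      simp only [Finset.mem_filter, Finset.Subset.rfl, Finset.not_subset] at hS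
      obtain ⟨k, hkE, hkS⟩ := hS.2
      have hC0 : C (fun k => if k ∈ S then b k else a k) = 0 := by
        apply hC.1
        · intro i
          by_cases hi : i ∈ S <;> simp [hi, ha i, hb i]
        · exact ⟨k, by simp [hkS, hE k (by simpa using hkE)]⟩
      rw [hC0, mul_zero]
    rw [h2, add_zero]
    apply Finset.sum_bij' (i := fun S _ => S ∩ E) (j := fun T _ => T ∪ Eᶜ)
    · intro S hS
      simp [Finset.mem_powerset, Finset.inter_subset_right]
    · intro T hT
      simp only [Finset.mem_filter, Finset.mem_univ, true_and]
      exact Finset.subset_union_right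
    · intro S hS
      simp only [Finset.mem_filter, Finset.mem_univ, true_and] at hS
      ext k
      simp only [Finset.mem_union, Finset.mem_inter, Finset.mem_compl]
      by_cases hk : k ∈ E
      · simp [hk]
      · simp [hk, hS (Finset.mem_compl.2 hk)]
    · intro T hT
      simp only [Finset.mem_powerset] at hT
      ext k
      simp only [Finset.mem_inter, Finset.mem_union, Finset.mem_compl]
      constructor
      · rintro ⟨h1 | h1, h2⟩
        · exact h1
        · exact absurd h2 h1
      · intro hk
        exact ⟨Or.inl hk, hT hk⟩
    · intro S hS
      simp only [Finset.mem_filter, Finset.mem_univ, true_and] at hS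
      have hSE : S = (S ∩ E) ∪ Eᶜ := by
        ext k
        simp only [Finset.mem_union, Finset.mem_inter, Finset.mem_compl]
        by_cases hk : k ∈ E
        · simp [hk]
        · simp [hk, hS (by simpa using hk)]
      have hcard : d - S.card = E.card - (S ∩ E).card := by
        have hdisj : Disjoint (S ∩ E) Eᶜ :=
          Finset.disjoint_left.2 (fun x hx hx2 => (Finset.mem_compl.1 hx2) (Finset.mem_inter.1 hx).2)
        have h1 : ((S ∩ E) ∪ Eᶜ).card = (S ∩ E).card + Eᶜ.card :=
          Finset.card_union_of_disjoint hdisj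
        rw [← hSE] at h1
        have h2 : Eᶜ.card = d - E.card := by simp [Finset.card_compl]
        have h3 : E.card ≤ d := by
          simpa using Finset.card_le_univ E
        have h4 : (S ∩ E).card ≤ E.card := Finset.card_le_card Finset.inter_subset_right
        omega
      rw [hcard]
      congr 1
      conv_lhs => rw [hSE]
  rw [key] at h
  exact h

lemma box_update {d : ℕ} {v : Fin d → ℝ} (hv : ∀ i, v i ∈ Set.Icc (0:ℝ) 1)
    (i : Fin d) {x : ℝ} (hx : x ∈ Set.Icc (0:ℝ) 1) :
    ∀ k, Function.update v i x k ∈ Set.Icc (0:ℝ) 1 := by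
  intro k
  rcases eq_or_ne k i with rfl | h
  · simpa using hx
  · simpa [Function.update_of_ne h] using hv k

lemma mono_one {d : ℕ} {C : (Fin d → ℝ) → ℝ} (hC : IsCopula d C)
    {v : Fin d → ℝ} (hv : ∀ i, v i ∈ Set.Icc (0:ℝ) 1) (i : Fin d)
    {x y : ℝ} (hx : 0 ≤ x) (hxy : x ≤ y) (hy : y ≤ 1) :
    C (Function.update v i x) ≤ C (Function.update v i y) := by
  have key := copula_vol hC (fun k => if k = i then x else 0) (Function.update v i y)
    (by intro k; by_cases h : k = i <;> simp [h]; constructor <;> linarith)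
    (box_update hv i ⟨le_trans hx hxy, hy⟩)
    (by intro k
        by_cases h : k = i
        · subst h; simp [hxy]
        · simp [h, Function.update_of_ne h, (hv k).1])
    {i} (by intro k hk; simp at hk; simp [hk])
  have hps : ({i} : Finset (Fin d)).powerset = {∅, {i}} := by
    ext T
    simp [Finset.subset_singleton_iff]
  rw [hps, Finset.sum_insert (by
    simp only [Finset.mem_singleton]
    exact fun h => Finset.singleton_ne_empty i h.symm), Finset.sum_singleton] at key
  have e1 : (fun k => if k ∈ (∅ : Finset (Fin d)) ∪ ({i} : Finset (Fin d))ᶜ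
      then Function.update v i y k else if k = i then x else 0) = Function.update v i x := by
    funext k
    by_cases h : k = i
    · subst h; simp
    · simp [h, Function.update_of_ne h]
  have e2 : (fun k => if k ∈ ({i} : Finset (Fin d)) ∪ ({i} : Finset (Fin d))ᶜ
      then Function.update v i y k else if k = i then x else 0) = Function.update v i y := by
    funext k; simp
  rw [e1, e2] at key
  simp at key
  linarith

lemma vol2 {d : ℕ} {C : (Fin d → ℝ) → ℝ} (hC : IsCopula d C)
    {v : Fin d → ℝ} (hv : ∀ i, v i ∈ Set.Icc (0:ℝ) 1) {i j : Fin d} (hij : i ≠ j)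
    {x y X Y : ℝ} (hx : 0 ≤ x) (hxy : x ≤ y) (hy : y ≤ 1)
    (hX : 0 ≤ X) (hXY : X ≤ Y) (hY : Y ≤ 1) :
    C (Function.update (Function.update v i x) j Y)
      + C (Function.update (Function.update v i y) j X)
    ≤ C (Function.update (Function.update v i x) j X)
      + C (Function.update (Function.update v i y) j Y) := by
  set b : Fin d → ℝ := Function.update (Function.update v i y) j Y with hb_def
  have hbbox : ∀ k, b k ∈ Set.Icc (0:ℝ) 1 :=
    box_update (box_update hv i ⟨le_trans hx hxy, hy⟩) j ⟨le_trans hX hXY, hY⟩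
  have hbi : b i = y := by
    rw [hb_def, Function.update_of_ne hij, Function.update_self]
  have hbj : b j = Y := by rw [hb_def, Function.update_self]
  have hbo : ∀ k, k ≠ i → k ≠ j → b k = v k := by
    intro k h1 h2
    rw [hb_def, Function.update_of_ne h2, Function.update_of_ne h1]
  set a : Fin d → ℝ := fun k => if k = i then x else if k = j then X else 0 with ha_def
  have key := copula_vol hC a b
    (by
      intro k
      by_cases h1 : k = i
      · subst h1; simp [ha_def]; constructor <;> linarith
      · by_cases h2 : k = j
        · subst h2; simp [ha_def, Ne.symm hij]; constructor <;> linarith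
        · simp [ha_def, h1, h2])
    hbbox
    (by
      intro k
      by_cases h1 : k = i
      · subst h1; simp [ha_def, hbi, hxy]
      · by_cases h2 : k = j
        · subst h2; simp [ha_def, h1, hbj, hXY]
        · simp [ha_def, h1, h2, (hv k).1, hbo k h1 h2])
    (insert i {j})
    (by intro k hk; simp at hk; simp [ha_def, hk.1, hk.2])
  have hips : i ∉ ({j} : Finset (Fin d)) := by simp [hij]
  rw [Finset.sum_powerset_insert hips] at key
  have hps : ({j} : Finset (Fin d)).powerset = {∅, {j}} := by
    ext T
    simp [Finset.subset_singleton_iff]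
  have hne : (∅ : Finset (Fin d)) ∉ ({({j} : Finset (Fin d))} : Finset (Finset (Fin d))) := by
    simp only [Finset.mem_singleton]
    exact fun h => Finset.singleton_ne_empty j h.symm
  rw [hps, Finset.sum_insert hne, Finset.sum_singleton,
    Finset.sum_insert hne, Finset.sum_singleton] at key
  have hcard : (insert i ({j} : Finset (Fin d))).card = 2 := by
    rw [Finset.card_insert_of_notMem hips, Finset.card_singleton]
  have hvert : ∀ (T : Finset (Fin d)) (w : Fin d → ℝ),
      (∀ k, (k ∈ T → w k = b k) ∧ (k ∉ T → k = i ∨ k = j → w k = a k) ∧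
        (k ≠ i → k ≠ j → w k = v k)) →
      (fun k => if k ∈ T ∪ (insert i ({j} : Finset (Fin d)))ᶜ then b k else a k) = w := by
    intro T w hw
    funext k
    by_cases hkT : k ∈ T
    · rw [if_pos (Finset.mem_union_left _ hkT), ((hw k).1 hkT).symm]
    · by_cases hk1 : k = i
      · subst hk1
        have hmem : k ∉ T ∪ (insert k ({j} : Finset (Fin d)))ᶜ := by simp [hkT]
        rw [if_neg hmem, ((hw k).2.1 hkT (Or.inl rfl)).symm]
      · by_cases hk2 : k = j
        · subst hk2
          have hmem : k ∉ T ∪ (insert i ({k} : Finset (Fin d)))ᶜ := by simp [hkT]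
          rw [if_neg hmem, ((hw k).2.1 hkT (Or.inr rfl)).symm]
        · have hmem : k ∈ T ∪ (insert i ({j} : Finset (Fin d)))ᶜ :=
            Finset.mem_union_right _ (by simp [hk1, hk2])
          rw [if_pos hmem, hbo k hk1 hk2, ((hw k).2.2 hk1 hk2).symm]
  have e0 : (fun k => if k ∈ (∅ : Finset (Fin d)) ∪ (insert i ({j} : Finset (Fin d)))ᶜ then b k else a k)
      = Function.update (Function.update v i x) j X := by
    apply hvert
    intro k
    refine ⟨by simp, ?_, ?_⟩
    · rintro _ (rfl | rfl)
      · rw [Function.update_of_ne hij, Function.update_self, ha_def]; simp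
      · rw [Function.update_self, ha_def]; simp [Ne.symm hij]
    · intro h1 h2
      rw [Function.update_of_ne h2, Function.update_of_ne h1]
  have ej : (fun k => if k ∈ ({j} : Finset (Fin d)) ∪ (insert i ({j} : Finset (Fin d)))ᶜ then b k else a k)
      = Function.update (Function.update v i x) j Y := by
    apply hvert
    intro k
    refine ⟨?_, ?_, ?_⟩
    · intro hk
      simp only [Finset.mem_singleton] at hk
      subst hk
      rw [Function.update_self, hbj]
    · rintro hk (rfl | rfl)
      · rw [Function.update_of_ne hij, Function.update_self, ha_def]; simp
      · simp at hk
    · intro h1 h2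
      rw [Function.update_of_ne h2, Function.update_of_ne h1]
  have ei : (fun k => if k ∈ (insert i (∅ : Finset (Fin d))) ∪ (insert i ({j} : Finset (Fin d)))ᶜ then b k else a k)
      = Function.update (Function.update v i y) j X := by
    apply hvert
    intro k
    refine ⟨?_, ?_, ?_⟩
    · intro hk
      simp only [Finset.mem_insert, Finset.notMem_empty, or_false] at hk
      subst hk
      rw [Function.update_of_ne hij, Function.update_self, hbi]
    · rintro hk (rfl | rfl)
      · simp at hk
      · rw [Function.update_self, ha_def]; simp [Ne.symm hij]
    · intro h1 h2
      rw [Function.update_of_ne h2, Function.update_of_ne h1]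
  have eij : (fun k => if k ∈ (insert i ({j} : Finset (Fin d))) ∪ (insert i ({j} : Finset (Fin d)))ᶜ then b k else a k)
      = b := by
    funext k
    have hmem : k ∈ (insert i ({j} : Finset (Fin d))) ∪ (insert i ({j} : Finset (Fin d)))ᶜ := by
      by_cases h : k ∈ insert i ({j} : Finset (Fin d))
      · exact Finset.mem_union_left _ h
      · exact Finset.mem_union_right _ (Finset.mem_compl.2 h)
    rw [if_pos hmem]
  rw [e0, ej, ei, eij, hcard] at key
  simp only [Finset.card_empty, Finset.card_singleton, Finset.card_insert_of_notMem hips] at key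
  norm_num at key
  linarith

lemma lip_one {d : ℕ} {C : (Fin d → ℝ) → ℝ} (hC : IsCopula d C)
    {v : Fin d → ℝ} (hv : ∀ i, v i ∈ Set.Icc (0:ℝ) 1) (i : Fin d)
    {x y : ℝ} (hx : 0 ≤ x) (hxy : x ≤ y) (hy : y ≤ 1) :
    C (Function.update v i y) - C (Function.update v i x) ≤ y - x := by
  set w : Finset (Fin d) → (Fin d → ℝ) := fun s k => if k ∈ s ∧ k ≠ i then 1 else v k with hw_def
  have hwbox : ∀ s k, w s k ∈ Set.Icc (0:ℝ) 1 := by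
    intro s k
    rw [hw_def]
    by_cases h : k ∈ s ∧ k ≠ i
    · simp [h]
    · simpa [h] using hv k
  have claim : ∀ s : Finset (Fin d),
      C (Function.update v i y) - C (Function.update v i x)
        ≤ C (Function.update (w s) i y) - C (Function.update (w s) i x) := by
    intro s
    induction s using Finset.induction_on with
    | empty =>
      have : w ∅ = v := by funext k; simp [hw_def]
      rw [this]
    | @insert j s hj ih =>
      rcases eq_or_ne j i with rfl | hji
      · have : w (insert j s) = w s := by
          funext k
          rcases eq_or_ne k j with rfl | hk
          · simp [hw_def]
          · simp [hw_def, hk]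
        rw [this]
        exact ih
      · have hwj : w s j = v j := by simp [hw_def, hj]
        have hins : w (insert j s) = Function.update (w s) j 1 := by
          funext k
          rcases eq_or_ne k j with rfl | hk
          · simp [hw_def, hji]
          · simp [hw_def, Function.update_of_ne hk, hk]
        have h2 := vol2 hC (hwbox s) (Ne.symm hji) hx hxy hy (hv j).1 (hv j).2 le_rfl
          (X := v j) (Y := 1)
        have ex : Function.update (Function.update (w s) i x) j (v j)
            = Function.update (w s) i x := by
          have : (Function.update (w s) i x) j = v j := by
            rw [Function.update_of_ne hji, hwj]
          rw [← this, Function.update_eq_self]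
        have ey : Function.update (Function.update (w s) i y) j (v j)
            = Function.update (w s) i y := by
          have : (Function.update (w s) i y) j = v j := by
            rw [Function.update_of_ne hji, hwj]
          rw [← this, Function.update_eq_self]
        have cx : Function.update (Function.update (w s) i x) j 1
            = Function.update (w (insert j s)) i x := by
          rw [hins, Function.update_comm hji.symm]
        have cy : Function.update (Function.update (w s) i y) j 1
            = Function.update (w (insert j s)) i y := by
          rw [hins, Function.update_comm hji.symm]
        rw [ex, ey, cx, cy] at h2
        linarith
  have hfin := claim Finset.univ
  have hy' : C (Function.update (w Finset.univ) i y) = y := by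
    rw [hC.2.1 _ (box_update (hwbox Finset.univ) i ⟨le_trans hx hxy, hy⟩) i ?_]
    · simp
    · intro k hk
      rw [Function.update_of_ne hk]
      simp [hw_def, hk]
  have hx' : C (Function.update (w Finset.univ) i x) = x := by
    rw [hC.2.1 _ (box_update (hwbox Finset.univ) i ⟨hx, le_trans hxy hy⟩) i ?_]
    · simp
    · intro k hk
      rw [Function.update_of_ne hk]
      simp [hw_def, hk]
  rw [hy', hx'] at hfin
  exact hfin

/-- If the permutation `π` has exactly three non-fixed points `i₁ < i₂ < i₃` and `u` is
ordered, then `|C(u) − C(u_π)| ≤ u_{i₃} − u_{i₁} ≤ u_d − u_1`. -/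
theorem three_cycle_bound (d : ℕ) (hd : 3 ≤ d)
    (u : Fin d → ℝ) (hu : ∀ i, u i ∈ Set.Icc (0:ℝ) 1)
    (hmono : ∀ i j : Fin d, i ≤ j → u i ≤ u j)
    (π : Equiv.Perm (Fin d))
    (i₁ i₂ i₃ : Fin d) (h12 : i₁ < i₂) (h23 : i₂ < i₃)
    (hfix : ∀ i : Fin d, π i ≠ i ↔ (i = i₁ ∨ i = i₂ ∨ i = i₃))
    (C : (Fin d → ℝ) → ℝ) (hC : IsCopula d C) :
    |C u - C (u ∘ π)| ≤ u i₃ - u i₁ ∧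
    u i₃ - u i₁ ≤ u ⟨d - 1, by omega⟩ - u ⟨0, by omega⟩ := by
  have h13 : i₁ < i₃ := h12.trans h23
  have ne12 : i₁ ≠ i₂ := ne_of_lt h12
  have ne23 : i₂ ≠ i₃ := ne_of_lt h23
  have ne13 : i₁ ≠ i₃ := ne_of_lt h13
  have hab : u i₁ ≤ u i₂ := hmono _ _ h12.le
  have hbc : u i₂ ≤ u i₃ := hmono _ _ h23.le
  have hac : u i₁ ≤ u i₃ := hab.trans hbc
  constructor
  · -- cycle structure
    have hmem : ∀ k : Fin d, (k = i₁ ∨ k = i₂ ∨ k = i₃) →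
        (π k = i₁ ∨ π k = i₂ ∨ π k = i₃) := by
      intro k hk
      by_contra h
      have h1 : π (π k) = π k := not_not.1 (fun hne => h ((hfix (π k)).1 hne))
      exact ((hfix k).2 hk) (π.injective h1)
    have hout : ∀ k : Fin d, ¬(k = i₁ ∨ k = i₂ ∨ k = i₃) → π k = k := by
      intro k hk
      exact not_not.1 (fun hne => hk ((hfix k).1 hne))
    have n1 : π i₁ ≠ i₁ := (hfix i₁).2 (Or.inl rfl)
    have n2 : π i₂ ≠ i₂ := (hfix i₂).2 (Or.inr (Or.inl rfl))
    have n3 : π i₃ ≠ i₃ := (hfix i₃).2 (Or.inr (Or.inr rfl))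
    have e1 := hmem i₁ (Or.inl rfl)
    have e2 := hmem i₂ (Or.inr (Or.inl rfl))
    have e3 := hmem i₃ (Or.inr (Or.inr rfl))
    have eu1 : Function.update u i₁ (u i₁) = u := Function.update_eq_self _ _
    rcases e1 with h1 | h1 | h1
    · exact absurd h1 n1
    · -- Case 1 : π i₁ = i₂, π i₂ = i₃, π i₃ = i₁
      have h2 : π i₂ = i₃ := by
        rcases e2 with h | h | h
        · rcases e3 with g | g | g
          · exact absurd (π.injective (h.trans g.symm)) ne23
          · exact absurd (π.injective (g.trans h1.symm)) (Ne.symm ne13)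
          · exact absurd g n3
        · exact absurd h n2
        · exact h
      have h3 : π i₃ = i₁ := by
        rcases e3 with g | g | g
        · exact g
        · exact absurd (π.injective (g.trans h1.symm)) (Ne.symm ne13)
        · exact absurd g n3
      set Q : Fin d → ℝ := Function.update u i₁ (u i₂) with hQ_def
      set P : Fin d → ℝ := Function.update Q i₂ (u i₃) with hP_def
      have hQbox : ∀ k, Q k ∈ Set.Icc (0:ℝ) 1 := box_update hu i₁ (hu i₂)
      have hPbox : ∀ k, P k ∈ Set.Icc (0:ℝ) 1 := box_update hQbox i₂ (hu i₃)
      have eQ : Function.update Q i₂ (u i₂) = Q := by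
        rw [show u i₂ = Q i₂ by rw [hQ_def, Function.update_of_ne (Ne.symm ne12)]]
        exact Function.update_eq_self _ _
      have eP3 : Function.update P i₃ (u i₃) = P := by
        rw [show u i₃ = P i₃ by
          rw [hP_def, Function.update_of_ne (Ne.symm ne23), hQ_def,
            Function.update_of_ne (Ne.symm ne13)]]
        exact Function.update_eq_self _ _
      have huπ : u ∘ π = Function.update P i₃ (u i₁) := by
        funext k
        rcases eq_or_ne k i₃ with rfl | hk3
        · simp only [Function.comp_apply, h3, Function.update_self]
        · rw [Function.update_of_ne hk3, hP_def]
          rcases eq_or_ne k i₂ with rfl | hk2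
          · simp only [Function.comp_apply, h2, Function.update_self]
          · rw [Function.update_of_ne hk2, hQ_def]
            rcases eq_or_ne k i₁ with rfl | hk1
            · simp only [Function.comp_apply, h1, Function.update_self]
            · rw [Function.update_of_ne hk1, Function.comp_apply,
                hout k (by tauto)]
      have t1 : C u ≤ C Q := by
        have := mono_one hC hu i₁ (hu i₁).1 hab (hu i₂).2
        rwa [eu1] at this
      have t2 : C Q ≤ C P := by
        have := mono_one hC hQbox i₂ (hu i₂).1 hbc (hu i₃).2
        rwa [eQ] at this
      have t3 : C P - C (Function.update P i₃ (u i₁)) ≤ u i₃ - u i₁ := by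
        have := lip_one hC hPbox i₃ (hu i₁).1 hac (hu i₃).2
        rwa [eP3] at this
      have t4 : C (Function.update P i₃ (u i₁)) ≤ C P := by
        have := mono_one hC hPbox i₃ (hu i₁).1 hac (hu i₃).2
        rwa [eP3] at this
      have t5 : C P - C Q ≤ u i₃ - u i₂ := by
        have := lip_one hC hQbox i₂ (hu i₂).1 hbc (hu i₃).2
        rwa [eQ] at this
      have t6 : C Q - C u ≤ u i₂ - u i₁ := by
        have := lip_one hC hu i₁ (hu i₁).1 hab (hu i₂).2
        rwa [eu1] at this
      rw [huπ]
      rw [abs_le]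
      constructor <;> linarith
    · -- Case 2 : π i₁ = i₃, π i₂ = i₁, π i₃ = i₂
      have h3 : π i₃ = i₂ := by
        rcases e3 with g | g | g
        · rcases e2 with f | f | f
          · exact absurd (π.injective (f.trans g.symm)) ne23
          · exact absurd f n2
          · exact absurd (π.injective (f.trans h1.symm)) (Ne.symm ne12)
        · exact g
        · exact absurd g n3
      have h2 : π i₂ = i₁ := by
        rcases e2 with f | f | f
        · exact f
        · exact absurd f n2
        · exact absurd (π.injective (f.trans h1.symm)) (Ne.symm ne12)
      set Q : Fin d → ℝ := Function.update u i₁ (u i₃) with hQ_def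
      set R : Fin d → ℝ := Function.update Q i₂ (u i₁) with hR_def
      have hQbox : ∀ k, Q k ∈ Set.Icc (0:ℝ) 1 := box_update hu i₁ (hu i₃)
      have hRbox : ∀ k, R k ∈ Set.Icc (0:ℝ) 1 := box_update hQbox i₂ (hu i₁)
      have eQ2 : Function.update Q i₂ (u i₂) = Q := by
        rw [show u i₂ = Q i₂ by rw [hQ_def, Function.update_of_ne (Ne.symm ne12)]]
        exact Function.update_eq_self _ _
      have eR3 : Function.update R i₃ (u i₃) = R := by
        rw [show u i₃ = R i₃ by
          rw [hR_def, Function.update_of_ne (Ne.symm ne23), hQ_def,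
            Function.update_of_ne (Ne.symm ne13)]]
        exact Function.update_eq_self _ _
      have huπ : u ∘ π = Function.update R i₃ (u i₂) := by
        funext k
        rcases eq_or_ne k i₃ with rfl | hk3
        · simp only [Function.comp_apply, h3, Function.update_self]
        · rw [Function.update_of_ne hk3, hR_def]
          rcases eq_or_ne k i₂ with rfl | hk2
          · simp only [Function.comp_apply, h2, Function.update_self]
          · rw [Function.update_of_ne hk2, hQ_def]
            rcases eq_or_ne k i₁ with rfl | hk1
            · simp only [Function.comp_apply, h1, Function.update_self]
            · rw [Function.update_of_ne hk1, Function.comp_apply,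
                hout k (by tauto)]
      have s1 : C u ≤ C Q := by
        have := mono_one hC hu i₁ (hu i₁).1 hac (hu i₃).2
        rwa [eu1] at this
      have s2 : C Q - C u ≤ u i₃ - u i₁ := by
        have := lip_one hC hu i₁ (hu i₁).1 hac (hu i₃).2
        rwa [eu1] at this
      have s3 : C (Function.update R i₃ (u i₂)) ≤ C R := by
        have := mono_one hC hRbox i₃ (hu i₂).1 hbc (hu i₃).2
        rwa [eR3] at this
      have s4 : C R ≤ C Q := by
        have := mono_one hC hQbox i₂ (hu i₁).1 hab (hu i₂).2
        rwa [eQ2] at this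
      have s5 : C Q - C R ≤ u i₂ - u i₁ := by
        have := lip_one hC hQbox i₂ (hu i₁).1 hab (hu i₂).2
        rwa [eQ2] at this
      have s6 : C R - C (Function.update R i₃ (u i₂)) ≤ u i₃ - u i₂ := by
        have := lip_one hC hRbox i₃ (hu i₂).1 hbc (hu i₃).2
        rwa [eR3] at this
      rw [huπ, abs_le]
      constructor <;> linarith
  · have hl : (⟨0, by omega⟩ : Fin d) ≤ i₁ := by
      simp [Fin.le_def]
    have hr : i₃ ≤ (⟨d - 1, by omega⟩ : Fin d) := by
      have := i₃.isLt
      simp [Fin.le_def]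
      omega
    exact sub_le_sub (hmono _ _ hr) (hmono _ _ hl)
end

section
/- For d = 2, the function C(u_1, u_2) := min{ u_1, u_2, (u_1 − 1/3)^+ + (u_2 − 2/3)^+ } is a 2-copula, and it satisfies |C(1/3, 2/3) − C(2/3, 1/3)| = 1/3, so the bound |C(u) − C(u_τ)| ≤ 1/3 for 2-copulas (where τ interchanges the two arguments) is attained. -/
/-- `min` is supermodular. -/
lemma supmod (x x' y y' : ℝ) (hx : x ≤ x') (hy : y ≤ y') :
    0 ≤ min x' y' - min x y' - min x' y + min x y := by
  simp only [min_def]; split_ifs <;> linarith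

set_option maxHeartbeats 1600000 in
/-- Decomposition of Nelsen's copula on the unit square. -/
lemma nelsen_decomp (u v : ℝ) (hu0 : 0 ≤ u) (hu1 : u ≤ 1) (hv0 : 0 ≤ v) (hv1 : v ≤ 1) :
    min u (min v (max (u - 1/3) 0 + max (v - 2/3) 0)) =
      min u (max (v - 2/3) 0) + min (max (u - 1/3) 0) v := by
  simp only [min_def, max_def]; split_ifs <;> linarith

/-- A 2-copula: `C(u,0) = C(0,u) = 0`, `C(u,1) = C(1,u) = u` for `u ∈ [0,1]`, and `C`
is 2-increasing on `[0,1]²`. -/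
def Is2Copula (C : ℝ → ℝ → ℝ) : Prop :=
  (∀ u ∈ Set.Icc (0:ℝ) 1, C u 0 = 0 ∧ C 0 u = 0 ∧ C u 1 = u ∧ C 1 u = u) ∧
  (∀ a₁ b₁ a₂ b₂ : ℝ, a₁ ∈ Set.Icc (0:ℝ) 1 → b₁ ∈ Set.Icc (0:ℝ) 1 →
    a₂ ∈ Set.Icc (0:ℝ) 1 → b₂ ∈ Set.Icc (0:ℝ) 1 → a₁ ≤ b₁ → a₂ ≤ b₂ →
    0 ≤ C b₁ b₂ - C a₁ b₂ - C b₁ a₂ + C a₁ a₂)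

/-- Nelsen's extremal 2-copula
`C(u₁,u₂) = min{u₁, u₂, (u₁ − 1/3)⁺ + (u₂ − 2/3)⁺}` attains the bound `1/3` at
`(1/3, 2/3)`: it is a 2-copula and `|C(1/3, 2/3) − C(2/3, 1/3)| = 1/3`. -/
theorem nelsen_extremal :
    Is2Copula (fun u₁ u₂ => min u₁ (min u₂ (max (u₁ - 1/3) 0 + max (u₂ - 2/3) 0))) ∧
    |(fun u₁ u₂ : ℝ => min u₁ (min u₂ (max (u₁ - 1/3) 0 + max (u₂ - 2/3) 0)))
        (1/3) (2/3) -
      (fun u₁ u₂ : ℝ => min u₁ (min u₂ (max (u₁ - 1/3) 0 + max (u₂ - 2/3) 0)))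
        (2/3) (1/3)| = 1/3 := by
  constructor
  · constructor
    · rintro u ⟨hu0, hu1⟩
      refine ⟨?_, ?_, ?_, ?_⟩ <;>
        · simp only [min_def, max_def]; split_ifs <;> linarith
    · rintro a₁ b₁ a₂ b₂ ⟨ha₁0, ha₁1⟩ ⟨hb₁0, hb₁1⟩ ⟨ha₂0, ha₂1⟩ ⟨hb₂0, hb₂1⟩ h1 h2
      simp only
      rw [nelsen_decomp b₁ b₂ hb₁0 hb₁1 hb₂0 hb₂1,
        nelsen_decomp a₁ b₂ ha₁0 ha₁1 hb₂0 hb₂1,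
        nelsen_decomp b₁ a₂ hb₁0 hb₁1 ha₂0 ha₂1,
        nelsen_decomp a₁ a₂ ha₁0 ha₁1 ha₂0 ha₂1]
      have hf : max (a₁ - 1/3) 0 ≤ max (b₁ - 1/3) 0 := by
        apply max_le_max <;> linarith
      have hg : max (a₂ - 2/3) 0 ≤ max (b₂ - 2/3) 0 := by
        apply max_le_max <;> linarith
      have h3 := supmod a₁ b₁ (max (a₂ - 2/3) 0) (max (b₂ - 2/3) 0) h1 hg
      have h4 := supmod (max (a₁ - 1/3) 0) (max (b₁ - 1/3) 0) a₂ b₂ hf h2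
      linarith
  · norm_num
end
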